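/- arXiv:2407.04835 — 11 statements merged into one kernel-verified Lean document; each statement's English description precedes it below -/
import Mathlib

section
/- Let $q > p > 2$ be finite real numbers. Then for every real-valued random variable $X$ on a probability space with $\mathbb{E}|X|^2 = 1$ and $\mathbb{E}|X|^q < \infty$, one has $\mathbb{E}|X| \leq 1 - C \cdot (\mathbb{E}|X|^p - 1)^{(q-2)/(q-p)} / (\mathbb{E}|X|^q - 1)^{(p-2)/(q-p)}$ with the explicit constant $C = (\min\{1, q-2\})^{(p-2)/(q-p)} / p^{2(q-2)/(q-p)}$. -/
open MeasureTheory Real Filter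

section SharpCS_aux
/-- helper: global derivative + nonneg on interior ⇒ monotone on convex set -/
lemma my_mono {u u' : ℝ → ℝ} {S : Set ℝ} (hS : Convex ℝ S)
    (hd : ∀ x, HasDerivAt u (u' x) x) (h0 : ∀ x ∈ interior S, 0 ≤ u' x) :
    MonotoneOn u S := by
  apply monotoneOn_of_deriv_nonneg hS
  · exact (continuous_iff_continuousAt.2 fun x => (hd x).continuousAt).continuousOn
  · exact fun x _ => (hd x).differentiableAt.differentiableWithinAt
  · intro x hx; rw [(hd x).deriv]; exact h0 x hx

lemma my_anti {u u' : ℝ → ℝ} {S : Set ℝ} (hS : Convex ℝ S)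
    (hd : ∀ x, HasDerivAt u (u' x) x) (h0 : ∀ x ∈ interior S, u' x ≤ 0) :
    AntitoneOn u S := by
  apply antitoneOn_of_deriv_nonpos hS
  · exact (continuous_iff_continuousAt.2 fun x => (hd x).continuousAt).continuousOn
  · exact fun x _ => (hd x).differentiableAt.differentiableWithinAt
  · intro x hx; rw [(hd x).deriv]; exact h0 x hx

/-- Lemma U : for 2 ≤ a ≤ b, x ≥ 0 : ((b-a)/2)(x²-1) ≤ x^b - x^a -/
lemma lemU {a b x : ℝ} (ha : 2 ≤ a) (hab : a ≤ b) (hx : 0 ≤ x) :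
    (b - a) / 2 * (x ^ 2 - 1) ≤ x ^ b - x ^ a := by
  set u : ℝ → ℝ := fun t => t ^ b - t ^ a - (b - a) / 2 * (t ^ 2 - 1) with hu
  have ha1 : (1:ℝ) ≤ a := by linarith
  have hb1 : (1:ℝ) ≤ b := by linarith
  have hd : ∀ t, HasDerivAt u (b * t ^ (b-1) - a * t ^ (a-1) - (b - a) * t) t := by
    intro t
    have h1 : HasDerivAt (fun t : ℝ => t ^ b) (b * t ^ (b-1)) t :=
      Real.hasDerivAt_rpow_const (Or.inr hb1)
    have h2 : HasDerivAt (fun t : ℝ => t ^ a) (a * t ^ (a-1)) t :=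
      Real.hasDerivAt_rpow_const (Or.inr ha1)
    have h3 : HasDerivAt (fun t : ℝ => (b - a) / 2 * (t ^ 2 - 1)) ((b-a)/2 * (2*t)) t := by
      have : HasDerivAt (fun t : ℝ => t ^ 2 - 1) (2*t) t := by
        simpa using ((hasDerivAt_pow 2 t).sub_const 1)
      exact this.const_mul _
    have := (h1.sub h2).sub h3
    exact this.congr_deriv (by ring)
  have hu1 : u 1 = 0 := by simp [hu]
  rcases le_total x 1 with hx1 | hx1
  · -- antitone on [0,1]
    have hanti : AntitoneOn u (Set.Icc 0 1) := by
      apply my_anti (convex_Icc 0 1) hd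
      intro t ht
      rw [interior_Icc] at ht
      obtain ⟨ht0, ht1⟩ := ht
      have hb2 : t ^ (b-1) ≤ t ^ (a-1) :=
        Real.rpow_le_rpow_of_exponent_ge ht0 ht1.le (by linarith)
      have ha2 : t ^ (a-1) ≤ t := by
        calc t ^ (a-1) ≤ t ^ (1:ℝ) :=
              Real.rpow_le_rpow_of_exponent_ge ht0 ht1.le (by linarith)
        _ = t := Real.rpow_one t
      have hta : (0:ℝ) ≤ t ^ (a-1) := Real.rpow_nonneg ht0.le _
      nlinarith [Real.rpow_nonneg ht0.le (b-1)]
    have := hanti ⟨hx, hx1⟩ ⟨zero_le_one, le_refl 1⟩ hx1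
    rw [hu1] at this
    simpa [hu] using this
  · -- monotone on [1,∞)
    have hmono : MonotoneOn u (Set.Ici 1) := by
      apply my_mono (convex_Ici 1) hd
      intro t ht
      rw [interior_Ici] at ht
      have ht1 : (1:ℝ) ≤ t := ht.le
      have ht0 : (0:ℝ) ≤ t := by linarith
      have hb2 : t ^ (a-1) ≤ t ^ (b-1) :=
        Real.rpow_le_rpow_of_exponent_le ht1 (by linarith)
      have ha2 : t ≤ t ^ (a-1) := by
        calc t = t ^ (1:ℝ) := (Real.rpow_one t).symm
        _ ≤ t ^ (a-1) := Real.rpow_le_rpow_of_exponent_le ht1 (by linarith)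
      nlinarith [Real.rpow_nonneg ht0 (a-1)]
    have := hmono (Set.mem_Ici.2 (le_refl 1)) (Set.mem_Ici.2 hx1) hx1
    rw [hu1] at this
    simpa [hu] using this

/-- w1 : for 1 ≤ c, 1 ≤ x ≤ T : x^c - 1 ≤ c T^(c-1) (x-1) -/
lemma lemW1 {c T x : ℝ} (hc : 1 ≤ c) (hx : 1 ≤ x) (hxT : x ≤ T) :
    x ^ c - 1 ≤ c * T ^ (c-1) * (x - 1) := by
  have hT : (1:ℝ) ≤ T := le_trans hx hxT
  set v : ℝ → ℝ := fun t => c * T ^ (c-1) * (t - 1) - t ^ c + 1 with hv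
  have hd : ∀ t, HasDerivAt v (c * T ^ (c-1) - c * t ^ (c-1)) t := by
    intro t
    have h1 : HasDerivAt (fun t : ℝ => t ^ c) (c * t ^ (c-1)) t :=
      Real.hasDerivAt_rpow_const (Or.inr hc)
    have h2 : HasDerivAt (fun t : ℝ => c * T ^ (c-1) * (t - 1)) (c * T ^ (c-1)) t := by
      simpa using ((hasDerivAt_id t).sub_const 1).const_mul (c * T ^ (c-1))
    exact (h2.sub h1).add_const 1
  have hmono : MonotoneOn v (Set.Icc 1 T) := by
    apply my_mono (convex_Icc 1 T) hd
    intro t ht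
    rw [interior_Icc] at ht
    have h1 : t ^ (c-1) ≤ T ^ (c-1) :=
      Real.rpow_le_rpow (by linarith [ht.1]) ht.2.le (by linarith)
    nlinarith
  have := hmono ⟨le_refl 1, hT⟩ ⟨hx, hxT⟩ hx
  have hv1 : v 1 = 0 := by simp [hv]
  rw [hv1] at this
  simp only [hv] at this
  linarith

/-- w2 : for 2 ≤ p, 0 ≤ x ≤ 1 : x - x^(p-1) ≤ (p-1)(1-x) -/
lemma lemW2 {p x : ℝ} (hp : 2 ≤ p) (hx : 0 ≤ x) (hx1 : x ≤ 1) :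
    x - x ^ (p-1) ≤ (p - 1) * (1 - x) := by
  set v : ℝ → ℝ := fun t => (p - 1) * (1 - t) - t + t ^ (p-1) with hv
  have hd : ∀ t, HasDerivAt v (-(p-1) - 1 + (p-1) * t ^ (p-2)) t := by
    intro t
    have h1 : HasDerivAt (fun t : ℝ => t ^ (p-1)) ((p-1) * t ^ (p-1-1)) t :=
      Real.hasDerivAt_rpow_const (Or.inr (by linarith))
    have h2 : HasDerivAt (fun t : ℝ => (p - 1) * (1 - t) - t) (-(p-1) - 1) t := by
      have : HasDerivAt (fun t : ℝ => (1:ℝ) - t) (-1) t := by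
        simpa using (hasDerivAt_id t).const_sub 1
      exact ((this.const_mul (p-1)).sub (hasDerivAt_id t)).congr_deriv (by ring)
    have := h2.add h1
    rw [show p - 1 - 1 = p - 2 by ring] at this
    exact this
  have hanti : AntitoneOn v (Set.Icc 0 1) := by
    apply my_anti (convex_Icc 0 1) hd
    intro t ht
    rw [interior_Icc] at ht
    have h1 : t ^ (p-2) ≤ 1 := Real.rpow_le_one ht.1.le ht.2.le (by linarith)
    nlinarith
  have := hanti ⟨hx, hx1⟩ ⟨zero_le_one, le_refl 1⟩ hx1
  have hv1 : v 1 = 0 := by simp [hv]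
  rw [hv1] at this
  simp only [hv] at this
  linarith

/-- φ : for 2 < p, 1 ≤ T, 0 ≤ x ≤ T :  x^p - 1 - p/2 (x²-1) ≤ p(p-1)/2 T^(p-2) (x-1)² -/
lemma lemPhi {p T x : ℝ} (hp : 2 < p) (hT : 1 ≤ T) (hx : 0 ≤ x) (hxT : x ≤ T) :
    x ^ p - 1 - p/2 * (x^2 - 1) ≤ p * (p-1) / 2 * T ^ (p-2) * (x - 1)^2 := by
  set φ : ℝ → ℝ := fun t => p * (p-1) / 2 * T ^ (p-2) * (t - 1)^2 + p/2 * (t^2 - 1) + 1 - t ^ p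
    with hφ
  have hd : ∀ t, HasDerivAt φ
      (p * (p-1) * T ^ (p-2) * (t - 1) + p * t - p * t ^ (p-1)) t := by
    intro t
    have h1 : HasDerivAt (fun t : ℝ => t ^ p) (p * t ^ (p-1)) t :=
      Real.hasDerivAt_rpow_const (Or.inr (by linarith))
    have h2 : HasDerivAt (fun t : ℝ => (t - 1)^2) (2 * (t - 1)) t := by
      exact (((hasDerivAt_id t).sub_const 1).pow 2).congr_deriv (by simp)
    have h3 : HasDerivAt (fun t : ℝ => t^2 - 1) (2 * t) t := by
      simpa using ((hasDerivAt_pow 2 t).sub_const 1)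
    have := (((h2.const_mul (p * (p-1) / 2 * T ^ (p-2))).add
      (h3.const_mul (p/2))).add_const 1).sub h1
    exact this.congr_deriv (by ring)
  have hφ1 : φ 1 = 0 := by simp [hφ]
  have hTnn : (0:ℝ) ≤ T ^ (p-2) := Real.rpow_nonneg (by linarith) _
  have hT1 : (1:ℝ) ≤ T ^ (p-2) := Real.one_le_rpow hT (by linarith)
  have key : 0 ≤ φ x := by
    rcases le_total x 1 with hx1 | hx1
    · have hanti : AntitoneOn φ (Set.Icc 0 1) := by
        apply my_anti (convex_Icc 0 1) hd
        intro t ht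
        rw [interior_Icc] at ht
        have w2 := lemW2 hp.le ht.1.le ht.2.le
        have hw2 := mul_le_mul_of_nonneg_left w2 (show (0:ℝ) ≤ p by linarith)
        have hprod : 0 ≤ p * (p-1) * ((T ^ (p-2) - 1) * (1 - t)) :=
          mul_nonneg (mul_nonneg (by linarith) (by linarith))
            (mul_nonneg (by linarith) (by linarith [ht.2]))
        nlinarith [hw2, hprod]
      have := hanti ⟨hx, hx1⟩ ⟨zero_le_one, le_refl 1⟩ hx1
      rw [hφ1] at this; exact this
    · have hmono : MonotoneOn φ (Set.Icc 1 T) := by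
        apply my_mono (convex_Icc 1 T) hd
        intro t ht
        rw [interior_Icc] at ht
        have w1 := lemW1 (c := p - 1) (by linarith) ht.1.le ht.2.le
        have : p - 1 - 1 = p - 2 := by ring
        rw [this] at w1
        have hw1 := mul_le_mul_of_nonneg_left w1 (show (0:ℝ) ≤ p by linarith)
        nlinarith [hw1, ht.1]
      have := hmono ⟨le_refl 1, hT⟩ ⟨hx1, hxT⟩ hx1
      rw [hφ1] at this; exact this
  simp only [hφ] at key
  linarith

/-- the g-function is nonneg -/
lemma lemG {q x : ℝ} (hq : 2 ≤ q) (hx : 0 ≤ x) : 0 ≤ x ^ q - 1 - q/2 * (x^2 - 1) := by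
  have h := lemU (a := 2) (b := q) le_rfl hq hx
  have h2 : x ^ (2:ℝ) = x ^ (2:ℕ) := by
    rw [← Real.rpow_natCast x 2]; norm_num
  rw [h2] at h
  push_cast at h
  linarith

/-- **GPW**: the global pointwise inequality. -/
lemma lemGPW {p q T x : ℝ} (hp : 2 < p) (hpq : p < q) (hT : 1 ≤ T) (hx : 0 ≤ x) :
    x ^ p - 1 - p/2 * (x^2 - 1) ≤
      p * (p-1) / 2 * T ^ (p-2) * (x - 1)^2 +
        (1 / min 1 (q-2)) * T ^ (p-q) * (x ^ q - 1 - q/2 * (x^2 - 1)) := by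
  have hm0 : 0 < min 1 (q-2) := lt_min one_pos (by linarith)
  have hm1 : min 1 (q-2) ≤ 1 := min_le_left _ _
  have hm1' : (1:ℝ) ≤ 1 / min 1 (q-2) := one_le_one_div hm0 hm1
  have hT0 : (0:ℝ) < T := by linarith
  have hTpq : (0:ℝ) ≤ T ^ (p-q) := Real.rpow_nonneg hT0.le _
  have hTp2 : (0:ℝ) ≤ T ^ (p-2) := Real.rpow_nonneg hT0.le _
  have hgx : ∀ t : ℝ, 0 ≤ t → 0 ≤ t ^ q - 1 - q/2 * (t^2 - 1) :=
    fun t ht => lemG (by linarith) ht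
  rcases le_total x T with hxT | hTx
  · have h1 := lemPhi hp hT hx hxT
    have h2 : 0 ≤ (1 / min 1 (q-2)) * T ^ (p-q) * (x ^ q - 1 - q/2 * (x^2 - 1)) := by
      have := hgx x hx
      positivity
    linarith
  · -- region x ≥ T
    set c1 : ℝ := p * (p-1) / 2 * T ^ (p-2) with hc1
    set c2 : ℝ := (1 / min 1 (q-2)) * T ^ (p-q) with hc2
    have hc1nn : 0 ≤ c1 := by rw [hc1]; exact mul_nonneg (by nlinarith) hTp2
    have hc2T : T ^ (p-q) ≤ c2 := by
      rw [hc2]; nlinarith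
    have hc2nn : 0 ≤ c2 := le_trans hTpq hc2T
    set ψ : ℝ → ℝ := fun t =>
      c1 * (t - 1)^2 + c2 * (t ^ q - 1 - q/2 * (t^2 - 1)) - (t ^ p - 1 - p/2 * (t^2 - 1))
      with hψ
    have hd : ∀ t, HasDerivAt ψ
        (2*c1*(t-1) + c2*(q*t^(q-1) - q*t) - (p*t^(p-1) - p*t)) t := by
      intro t
      have h1 : HasDerivAt (fun t : ℝ => t ^ p) (p * t ^ (p-1)) t :=
        Real.hasDerivAt_rpow_const (Or.inr (by linarith))
      have h1q : HasDerivAt (fun t : ℝ => t ^ q) (q * t ^ (q-1)) t :=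
        Real.hasDerivAt_rpow_const (Or.inr (by linarith))
      have h2 : HasDerivAt (fun t : ℝ => (t - 1)^2) (2 * (t - 1)) t := by
        exact (((hasDerivAt_id t).sub_const 1).pow 2).congr_deriv (by simp)
      have h3 : HasDerivAt (fun t : ℝ => t^2 - 1) (2 * t) t := by
        simpa using ((hasDerivAt_pow 2 t).sub_const 1)
      have hq' : HasDerivAt (fun t : ℝ => t ^ q - 1 - q/2 * (t^2 - 1))
          (q * t ^ (q-1) - q * t) t := by
        have := (h1q.sub_const 1).sub (h3.const_mul (q/2))
        exact this.congr_deriv (by ring)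
      have hp' : HasDerivAt (fun t : ℝ => t ^ p - 1 - p/2 * (t^2 - 1))
          (p * t ^ (p-1) - p * t) t := by
        have := (h1.sub_const 1).sub (h3.const_mul (p/2))
        exact this.congr_deriv (by ring)
      exact ((h2.const_mul c1).add (hq'.const_mul c2)).sub hp' |>.congr_deriv (by ring)
    have hmono : MonotoneOn ψ (Set.Ici T) := by
      apply my_mono (convex_Ici T) hd
      intro t ht
      rw [interior_Ici] at ht
      have ht1 : (1:ℝ) ≤ t := le_trans hT ht.le
      have ht0 : (0:ℝ) < t := by linarith
      have hA : t ≤ t ^ (q-1) := by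
        calc t = t ^ (1:ℝ) := (Real.rpow_one t).symm
        _ ≤ t ^ (q-1) := Real.rpow_le_rpow_of_exponent_le ht1 (by linarith)
      have hB : t ≤ t ^ (p-1) := by
        calc t = t ^ (1:ℝ) := (Real.rpow_one t).symm
        _ ≤ t ^ (p-1) := Real.rpow_le_rpow_of_exponent_le ht1 (by linarith)
      -- t^(p-q) ≤ T^(p-q)
      have hTt : t ^ (p-q) ≤ T ^ (p-q) := by
        rw [show p - q = -(q-p) by ring, Real.rpow_neg hT0.le, Real.rpow_neg ht0.le]
        exact inv_anti₀ (Real.rpow_pos_of_pos hT0 _)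
          (Real.rpow_le_rpow hT0.le ht.le (by linarith))
      -- t^(p-q) * (t^(q-1) - t) = t^(p-1) - t^(p-q+1)
      have hmul : t ^ (p-q) * (t ^ (q-1) - t) = t ^ (p-1) - t ^ (p-q+1) := by
        rw [mul_sub, ← Real.rpow_add ht0, ← Real.rpow_add_one ht0.ne' (p-q)]
        ring_nf
      have hle1 : t ^ (p-q+1) ≤ t := by
        calc t ^ (p-q+1) ≤ t ^ (1:ℝ) :=
              Real.rpow_le_rpow_of_exponent_le ht1 (by linarith)
        _ = t := Real.rpow_one t
      -- chain
      have step1 : t ^ (p-1) - t ≤ t ^ (p-q) * (t ^ (q-1) - t) := by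
        rw [hmul]; linarith
      have step2 : t ^ (p-q) * (t ^ (q-1) - t) ≤ T ^ (p-q) * (t ^ (q-1) - t) :=
        mul_le_mul_of_nonneg_right hTt (by linarith)
      have step3 : T ^ (p-q) * (t ^ (q-1) - t) ≤ c2 * (t ^ (q-1) - t) :=
        mul_le_mul_of_nonneg_right hc2T (by linarith)
      have key : p * (t ^ (p-1) - t) ≤ c2 * (q * (t ^ (q-1) - t)) := by
        have h5 : t ^ (p-1) - t ≤ c2 * (t ^ (q-1) - t) := by linarith
        have h6 : p * (t ^ (p-1) - t) ≤ q * (t ^ (p-1) - t) := by nlinarith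
        have h7 : q * (t ^ (p-1) - t) ≤ q * (c2 * (t ^ (q-1) - t)) :=
          mul_le_mul_of_nonneg_left h5 (by linarith)
        calc p * (t ^ (p-1) - t) ≤ q * (c2 * (t ^ (q-1) - t)) := by linarith
        _ = c2 * (q * (t ^ (q-1) - t)) := by ring
      nlinarith [mul_nonneg (mul_nonneg (by norm_num : (0:ℝ) ≤ 2) hc1nn)
        (by linarith : (0:ℝ) ≤ t - 1), key]
    have hψT : 0 ≤ ψ T := by
      have h1 := lemPhi hp hT hT0.le (le_refl T)
      have h2 : 0 ≤ c2 * (T ^ q - 1 - q/2 * (T^2 - 1)) :=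
        mul_nonneg hc2nn (hgx T hT0.le)
      simp only [hψ, hc1]
      linarith
    have := hmono (Set.mem_Ici.2 (le_refl T)) (Set.mem_Ici.2 hTx) hTx
    have hfin : 0 ≤ ψ x := le_trans hψT this
    simp only [hψ] at hfin
    linarith

lemma lemKB {p q δ A B : ℝ} (hp : 2 < p) (hpq : p < q) (hδ : 0 ≤ δ) (hB : 0 ≤ B)
    (hAB : A ≤ B)
    (hT : ∀ T : ℝ, 1 ≤ T →
      A ≤ p * (p-1) * δ * T ^ (p-2) + B / min 1 (q-2) * T ^ (p-q)) :
    A ≤ p ^ (2:ℝ) * δ ^ (1 - (p-2)/(q-2)) * (B / min 1 (q-2)) ^ ((p-2)/(q-2)) := by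
  set m : ℝ := min 1 (q-2) with hm
  have hm0 : 0 < m := lt_min one_pos (by linarith)
  have hm1 : m ≤ 1 := min_le_left _ _
  set s : ℝ := (p-2)/(q-2) with hs
  have hq2 : (0:ℝ) < q - 2 := by linarith
  have hs0 : 0 < s := div_pos (by linarith) hq2
  have hs1 : s < 1 := (div_lt_one hq2).2 (by linarith)
  have hp2 : (1:ℝ) ≤ p ^ (2:ℝ) := Real.one_le_rpow (by linarith) (by norm_num)
  have hBm : 0 ≤ B / m := div_nonneg hB hm0.le
  rcases eq_or_lt_of_le hδ with hδ0 | hδ0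
  · -- δ = 0
    have hA0 : A ≤ 0 := by
      have htend : Tendsto (fun T : ℝ => B / m * T ^ (p-q)) atTop (nhds 0) := by
        have h1 : Tendsto (fun T : ℝ => T ^ (-(q-p))) atTop (nhds 0) :=
          tendsto_rpow_neg_atTop (by linarith)
        have h2 := h1.const_mul (B / m)
        rw [mul_zero] at h2
        refine h2.congr (fun T => by rw [show -(q-p) = p - q by ring])
      refine ge_of_tendsto htend ?_
      filter_upwards [eventually_ge_atTop 1] with T hT1
      have := hT T hT1
      rw [← hδ0] at this
      simpa using this
    have : δ ^ (1 - s) = 0 := by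
      rw [← hδ0]; exact Real.zero_rpow (by linarith)
    rw [this]
    have : (0:ℝ) ≤ (B/m) ^ s := Real.rpow_nonneg hBm _
    nlinarith
  · rcases le_or_gt B (m * δ) with hBle | hBgt
    · -- easy case B ≤ mδ
      rcases eq_or_lt_of_le hB with hB0 | hB0
      · have : (B/m) ^ s = 0 := by
          rw [← hB0, zero_div]; exact Real.zero_rpow (ne_of_gt hs0)
        rw [this]
        nlinarith
      · have h1 : B ≤ B / m := by
          rw [le_div_iff₀ hm0]; nlinarith
        have h2 : B / m ≤ δ := by rw [div_le_iff₀ hm0]; nlinarith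
        have hBm0 : 0 < B / m := div_pos hB0 hm0
        have h3 : B / m = (B/m) ^ (1-s) * (B/m) ^ s := by
          rw [← Real.rpow_add hBm0]; norm_num
        have h4 : (B/m) ^ (1-s) ≤ δ ^ (1-s) :=
          Real.rpow_le_rpow hBm h2 (by linarith)
        have h5 : (0:ℝ) ≤ (B/m) ^ s := Real.rpow_nonneg hBm _
        have h6 : (0:ℝ) ≤ δ ^ (1-s) := Real.rpow_nonneg hδ _
        calc A ≤ B := hAB
        _ ≤ B / m := h1
        _ = (B/m) ^ (1-s) * (B/m) ^ s := h3
        _ ≤ δ ^ (1-s) * (B/m) ^ s := mul_le_mul_of_nonneg_right h4 h5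
        _ ≤ p ^ (2:ℝ) * δ ^ (1-s) * (B/m) ^ s := by
            nlinarith [mul_le_mul_of_nonneg_right hp2 (mul_nonneg h6 h5)]
    · -- main case B > mδ
      set x : ℝ := (B / m) / δ with hx
      have hx1 : 1 < x := by
        rw [hx, lt_div_iff₀ hδ0, one_mul, lt_div_iff₀ hm0]; nlinarith
      have hx0 : (0:ℝ) < x := by linarith
      set T : ℝ := x ^ (1/(q-2)) with hTdef
      have hT1 : 1 ≤ T := Real.one_le_rpow hx1.le (by positivity)
      have key := hT T hT1
      have e1 : T ^ (p-2) = x ^ s := by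
        rw [hTdef, ← Real.rpow_mul hx0.le]
        congr 1
        rw [hs]; ring
      have e2 : T ^ (p-q) = x ^ (s-1) := by
        rw [hTdef, ← Real.rpow_mul hx0.le]
        congr 1
        rw [hs]; field_simp; ring
      rw [e1, e2] at key
      have e3 : B / m * x ^ (s-1) = δ * x ^ s := by
        have : B / m = δ * x := by rw [hx]; field_simp
        rw [this, show s - 1 = s + (-1) by ring, Real.rpow_add hx0,
          Real.rpow_neg_one]
        field_simp
      rw [e3] at key
      have e4 : δ * x ^ s = δ ^ (1-s) * (B/m) ^ s := by
        rw [hx, Real.div_rpow hBm hδ, show (1:ℝ) - s = 1 + (-s) by ring,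
          Real.rpow_add hδ0, Real.rpow_one, Real.rpow_neg hδ]
        field_simp
      have h7 : (0:ℝ) ≤ δ * x ^ s := mul_nonneg hδ (Real.rpow_nonneg hx0.le _)
      have : A ≤ (p * (p-1) + 1) * (δ * x ^ s) := by nlinarith
      calc A ≤ (p * (p-1) + 1) * (δ * x ^ s) := this
      _ ≤ p ^ (2:ℝ) * (δ * x ^ s) := by
          apply mul_le_mul_of_nonneg_right _ h7
          rw [show (2:ℝ) = ((2:ℕ):ℝ) by norm_num, Real.rpow_natCast]
          nlinarith
      _ = p ^ (2:ℝ) * δ ^ (1-s) * (B/m) ^ s := by rw [e4]; ring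

end SharpCS_aux

/-- **Theorem 1 with the explicit constant.** Let `q > p > 2` be finite real numbers. Then for
every real-valued random variable `X` on a probability space with `E|X|^2 = 1` and
`E|X|^q < ∞`, one has
`E|X| ≤ 1 - C * (E|X|^p - 1)^((q-2)/(q-p)) / (E|X|^q - 1)^((p-2)/(q-p))`
with the explicit constant `C = (min 1 (q-2))^((p-2)/(q-p)) / p^(2*(q-2)/(q-p))`. -/
theorem sharpened_cauchy_schwarz_explicit_constant (p q : ℝ) (hp : 2 < p) (hpq : p < q)
    {Ω : Type*} [MeasurableSpace Ω] (μ : Measure Ω) [IsProbabilityMeasure μ]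
    (X : Ω → ℝ) (hXmeas : Measurable X)
    (hX2 : (∫ ω, |X ω| ^ (2 : ℝ) ∂μ) = 1)
    (hXq : Integrable (fun ω => |X ω| ^ q) μ) :
    (∫ ω, |X ω| ∂μ) ≤ 1 -
      (min 1 (q - 2)) ^ ((p - 2) / (q - p)) / p ^ (2 * (q - 2) / (q - p)) *
        ((∫ ω, |X ω| ^ p ∂μ) - 1) ^ ((q - 2) / (q - p)) /
          ((∫ ω, |X ω| ^ q ∂μ) - 1) ^ ((p - 2) / (q - p)) := by
  have habs : ∀ ω, (0:ℝ) ≤ |X ω| := fun ω => abs_nonneg _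
  have hq2ne : q - 2 ≠ 0 := ne_of_gt (by linarith)
  have hqpne : q - p ≠ 0 := ne_of_gt (by linarith)
  -- integrability of powers
  have hIr : ∀ r : ℝ, 0 ≤ r → r ≤ q → Integrable (fun ω => |X ω| ^ r) μ := by
    intro r hr0 hrq
    apply Integrable.mono' ((integrable_const (1:ℝ)).add hXq)
    · exact (by fun_prop : Measurable fun ω => |X ω| ^ r).aestronglyMeasurable
    filter_upwards with ω
    simp only [Pi.add_apply, Real.norm_eq_abs,
      abs_of_nonneg (Real.rpow_nonneg (habs ω) r)]
    rcases le_total (|X ω|) 1 with h | h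
    · have h1 : |X ω| ^ r ≤ 1 := Real.rpow_le_one (habs ω) h hr0
      have h2 : (0:ℝ) ≤ |X ω| ^ q := Real.rpow_nonneg (habs ω) _
      linarith
    · have h1 : |X ω| ^ r ≤ |X ω| ^ q := Real.rpow_le_rpow_of_exponent_le h hrq
      linarith
  have hIp : Integrable (fun ω => |X ω| ^ p) μ := hIr p (by linarith) (by linarith)
  have hI2 : Integrable (fun ω => |X ω| ^ 2) μ := by
    have h := hIr 2 (by norm_num) (by linarith)
    have e : (fun ω => |X ω| ^ (2:ℝ)) = (fun ω => |X ω| ^ 2) := by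
      funext ω
      rw [show (2:ℝ) = ((2:ℕ):ℝ) by norm_num, Real.rpow_natCast]
    rwa [e] at h
  have hI1 : Integrable (fun ω => |X ω|) μ := by
    have h := hIr 1 (by norm_num) (by linarith)
    have e : (fun ω => |X ω| ^ (1:ℝ)) = (fun ω => |X ω|) := by
      funext ω; rw [Real.rpow_one]
    rwa [e] at h
  have hconst : Integrable (fun _ : Ω => (1:ℝ)) μ := integrable_const 1
  -- value of second moment
  have hEY2 : (∫ ω, |X ω| ^ 2 ∂μ) = 1 := by
    rw [← hX2]
    congr 1; funext ω
    rw [show (2:ℝ) = ((2:ℕ):ℝ) by norm_num, Real.rpow_natCast]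
  set I1 : ℝ := ∫ ω, |X ω| ∂μ with hI1def
  set Ip : ℝ := ∫ ω, |X ω| ^ p ∂μ with hIpdef
  set Iq : ℝ := ∫ ω, |X ω| ^ q ∂μ with hIqdef
  have hone : (∫ _ω, (1:ℝ) ∂μ) = 1 := by simp
  -- ∫ (|X|-1)^2 = 2 - 2 I1
  have h2x : Integrable (fun ω => |X ω| ^ 2 - 2 * |X ω|) μ := hI2.sub (hI1.const_mul 2)
  have hIsq : Integrable (fun ω => (|X ω| - 1)^2) μ := by
    have h : Integrable (fun ω => |X ω| ^ 2 - 2 * |X ω| + 1) μ := h2x.add hconst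
    have e : (fun ω => |X ω| ^ 2 - 2 * |X ω| + 1) = (fun ω => (|X ω| - 1)^2) := by
      funext ω; ring
    rwa [e] at h
  have hsq : (∫ ω, (|X ω| - 1)^2 ∂μ) = 2 - 2 * I1 := by
    have e : (fun ω => (|X ω| - 1)^2) = (fun ω => |X ω| ^ 2 - 2 * |X ω| + 1) := by
      funext ω; ring
    rw [e, integral_add h2x hconst, integral_sub hI2 (hI1.const_mul 2),
      integral_const_mul, hEY2, hone, ← hI1def]
    ring
  have hδ0 : 0 ≤ 1 - I1 := by
    have h := integral_nonneg (μ := μ) (f := fun ω => (|X ω| - 1)^2)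
      (fun ω => by positivity)
    rw [hsq] at h; linarith
  have h2c : Integrable (fun ω => |X ω| ^ 2 - 1) μ := hI2.sub hconst
  have h2cv : (∫ ω, (|X ω| ^ 2 - 1) ∂μ) = 0 := by
    rw [integral_sub hI2 hconst, hEY2, hone]; ring
  -- generic: ∫ (x^r - 1 - r/2 (x²-1)) = Ir - 1
  have compf : ∀ r : ℝ, Integrable (fun ω => |X ω| ^ r) μ →
      (∫ ω, (|X ω| ^ r - 1 - r/2 * (|X ω| ^ 2 - 1)) ∂μ)
        = (∫ ω, |X ω| ^ r ∂μ) - 1 := by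
    intro r hInt
    have hr1 : Integrable (fun ω => |X ω| ^ r - 1) μ := hInt.sub hconst
    have hr2 : Integrable (fun ω => r/2 * (|X ω| ^ 2 - 1)) μ := h2c.const_mul (r/2)
    rw [integral_sub hr1 hr2, integral_sub hInt hconst, integral_const_mul, h2cv, hone]
    ring
  -- 0 ≤ A
  have hA0 : 0 ≤ Ip - 1 := by
    have hL : Integrable (fun ω => |X ω| ^ 2 + (p-2)/2 * (|X ω| ^ 2 - 1)) μ :=
      hI2.add (h2c.const_mul ((p-2)/2))
    have hpt : (fun ω => |X ω| ^ 2 + (p-2)/2 * (|X ω| ^ 2 - 1)) ≤ fun ω => |X ω| ^ p := by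
      intro ω
      have h := lemU (a := 2) (b := p) le_rfl hp.le (habs ω)
      have e : |X ω| ^ (2:ℝ) = |X ω| ^ 2 := by
        rw [show (2:ℝ) = ((2:ℕ):ℝ) by norm_num, Real.rpow_natCast]
      rw [e] at h
      simp only
      linarith
    have h := integral_mono hL hIp hpt
    rw [integral_add hI2 (h2c.const_mul ((p-2)/2)), integral_const_mul, h2cv, hEY2,
      ← hIpdef] at h
    linarith
  -- A ≤ B
  have hAB : Ip - 1 ≤ Iq - 1 := by
    have hL : Integrable (fun ω => |X ω| ^ p + (q-p)/2 * (|X ω| ^ 2 - 1)) μ :=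
      hIp.add (h2c.const_mul ((q-p)/2))
    have hpt : (fun ω => |X ω| ^ p + (q-p)/2 * (|X ω| ^ 2 - 1)) ≤ fun ω => |X ω| ^ q := by
      intro ω
      have h := lemU (a := p) (b := q) hp.le hpq.le (habs ω)
      simp only
      linarith
    have h := integral_mono hL hXq hpt
    rw [integral_add hIp (h2c.const_mul ((q-p)/2)), integral_const_mul, h2cv,
      ← hIpdef, ← hIqdef] at h
    linarith
  have hB0 : 0 ≤ Iq - 1 := le_trans hA0 hAB
  have hm0 : 0 < min 1 (q-2) := lt_min one_pos (by linarith)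
  -- family of T bounds
  have hTfam : ∀ T : ℝ, 1 ≤ T → Ip - 1 ≤
      p * (p-1) * (1 - I1) * T ^ (p-2) + (Iq - 1) / min 1 (q-2) * T ^ (p-q) := by
    intro T hT
    have hL : Integrable (fun ω => |X ω| ^ p - 1 - p/2 * (|X ω| ^ 2 - 1)) μ :=
      (hIp.sub hconst).sub (h2c.const_mul (p/2))
    have hgint : Integrable (fun ω => |X ω| ^ q - 1 - q/2 * (|X ω| ^ 2 - 1)) μ :=
      (hXq.sub hconst).sub (h2c.const_mul (q/2))
    have hR1 : Integrable (fun ω => p * (p-1) / 2 * T ^ (p-2) * (|X ω| - 1)^2) μ :=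
      hIsq.const_mul _
    have hR2 : Integrable (fun ω =>
        (1 / min 1 (q-2)) * T ^ (p-q) * (|X ω| ^ q - 1 - q/2 * (|X ω| ^ 2 - 1))) μ :=
      hgint.const_mul _
    have hpt : (fun ω => |X ω| ^ p - 1 - p/2 * (|X ω| ^ 2 - 1)) ≤
        fun ω => p * (p-1) / 2 * T ^ (p-2) * (|X ω| - 1)^2 +
          (1 / min 1 (q-2)) * T ^ (p-q) * (|X ω| ^ q - 1 - q/2 * (|X ω| ^ 2 - 1)) := by
      intro ω
      have h := lemGPW hp hpq hT (habs ω)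
      simp only
      linarith
    have hR : Integrable (fun ω => p * (p-1) / 2 * T ^ (p-2) * (|X ω| - 1)^2 +
        (1 / min 1 (q-2)) * T ^ (p-q) * (|X ω| ^ q - 1 - q/2 * (|X ω| ^ 2 - 1))) μ :=
      hR1.add hR2
    have h := integral_mono hL hR hpt
    rw [compf p hIp, integral_add hR1 hR2, integral_const_mul, integral_const_mul,
      hsq, compf q hXq, ← hIpdef, ← hIqdef] at h
    calc Ip - 1 ≤ p * (p-1) / 2 * T ^ (p-2) * (2 - 2*I1) +
        1 / min 1 (q-2) * T ^ (p-q) * (Iq - 1) := h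
    _ = p * (p-1) * (1 - I1) * T ^ (p-2) + (Iq - 1) / min 1 (q-2) * T ^ (p-q) := by
        ring
  -- the key bound
  have KB := lemKB hp hpq hδ0 hB0 hAB hTfam
  -- final algebra
  set A : ℝ := Ip - 1 with hAdef
  set B : ℝ := Iq - 1 with hBdef
  set α : ℝ := (q-2)/(q-p) with hαdef
  set β : ℝ := (p-2)/(q-p) with hβdef
  have hα0 : 0 < α := div_pos (by linarith) (by linarith)
  have hβ0 : 0 < β := div_pos (by linarith) (by linarith)
  rcases eq_or_lt_of_le hB0 with hBz | hBpos
  · -- B = 0, hence A = 0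
    have hAz : A = 0 := le_antisymm (hBz ▸ hAB) hA0
    rw [hAz, Real.zero_rpow (ne_of_gt hα0), mul_zero, zero_div, sub_zero]
    linarith
  · -- B > 0
    have hmβ : (0:ℝ) < (min 1 (q-2)) ^ β := Real.rpow_pos_of_pos hm0 _
    have hpα : (0:ℝ) < p ^ (2*α) := Real.rpow_pos_of_pos (by linarith) _
    have hBβ : (0:ℝ) < B ^ β := Real.rpow_pos_of_pos hBpos _
    have hs : (1:ℝ) - (p-2)/(q-2) = (q-p)/(q-2) := by field_simp; ring
    have hKBα : A ^ α ≤ p ^ (2*α) * ((1 - I1) * (B ^ β / (min 1 (q-2)) ^ β)) := by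
      have h1 : A ^ α ≤ (p ^ (2:ℝ) * (1 - I1) ^ ((q-p)/(q-2)) *
          (B / min 1 (q-2)) ^ ((p-2)/(q-2))) ^ α := by
        apply Real.rpow_le_rpow hA0 _ hα0.le
        rw [← hs]; exact KB
      have hx1 : (0:ℝ) ≤ p ^ (2:ℝ) := Real.rpow_nonneg (by linarith) _
      have hx2 : (0:ℝ) ≤ (1 - I1) ^ ((q-p)/(q-2)) := Real.rpow_nonneg hδ0 _
      have hx3 : (0:ℝ) ≤ (B / min 1 (q-2)) ^ ((p-2)/(q-2)) :=
        Real.rpow_nonneg (div_nonneg hB0 hm0.le) _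
      rw [Real.mul_rpow (mul_nonneg hx1 hx2) hx3, Real.mul_rpow hx1 hx2,
        ← Real.rpow_mul (by linarith : (0:ℝ) ≤ p),
        ← Real.rpow_mul hδ0, ← Real.rpow_mul (div_nonneg hB0 hm0.le)] at h1
      have e1 : (q-p)/(q-2) * α = 1 := by
        rw [hαdef]; field_simp
      have e2 : (p-2)/(q-2) * α = β := by
        rw [hαdef, hβdef]; field_simp
      rw [e1, e2, Real.rpow_one, Real.div_rpow hB0 hm0.le] at h1
      calc A ^ α ≤ p ^ (2*α) * (1 - I1) * (B ^ β / (min 1 (q-2)) ^ β) := h1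
      _ = p ^ (2*α) * ((1 - I1) * (B ^ β / (min 1 (q-2)) ^ β)) := by ring
    have hgoal : (min 1 (q-2)) ^ β / p ^ (2*(q-2)/(q-p)) * A ^ α / B ^ β ≤ 1 - I1 := by
      have e3 : 2*(q-2)/(q-p) = 2*α := by rw [hαdef]; ring
      rw [e3, div_le_iff₀ hBβ, div_mul_eq_mul_div, div_le_iff₀ hpα]
      calc (min 1 (q-2)) ^ β * A ^ α ≤ (min 1 (q-2)) ^ β *
          (p ^ (2*α) * ((1 - I1) * (B ^ β / (min 1 (q-2)) ^ β))) :=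
            mul_le_mul_of_nonneg_left hKBα hmβ.le
      _ = (1 - I1) * B ^ β * p ^ (2*α) := by
          field_simp
    linarith [hgoal]
end

section
/- For every real-valued random variable $X$ on a probability space with $\mathbb{E}|X|^2 = 1$ and $\mathbb{E}|X|^6 < \infty$, one has $\mathbb{E}|X| \leq 1 - \tfrac{1}{3} \cdot (\mathbb{E}|X|^4 - 1)^2 / (\mathbb{E}|X|^6 - 1)$. -/
open MeasureTheory

private lemma my_cs {Ω : Type*} [MeasurableSpace Ω] (μ : Measure Ω) (f g : Ω → ℝ)
    (hf2 : Integrable (fun ω => f ω ^ 2) μ) (hg2 : Integrable (fun ω => g ω ^ 2) μ)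
    (hfg : Integrable (fun ω => f ω * g ω) μ) :
    (∫ ω, f ω * g ω ∂μ) ^ 2 ≤ (∫ ω, f ω ^ 2 ∂μ) * (∫ ω, g ω ^ 2 ∂μ) := by
  set A := ∫ ω, f ω ^ 2 ∂μ
  set B := ∫ ω, g ω ^ 2 ∂μ
  set C := ∫ ω, f ω * g ω ∂μ
  have key : ∀ t : ℝ, 0 ≤ A * (t * t) + (2 * C) * t + B := by
    intro t
    have h1 : Integrable (fun ω => t ^ 2 * f ω ^ 2 + 2 * t * (f ω * g ω)) μ :=
      (hf2.const_mul _).add (hfg.const_mul _)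
    have hnn : 0 ≤ ∫ ω, (t ^ 2 * f ω ^ 2 + 2 * t * (f ω * g ω) + g ω ^ 2) ∂μ := by
      apply integral_nonneg
      intro ω
      simp only [Pi.zero_apply]
      nlinarith [sq_nonneg (t * f ω + g ω)]
    rw [integral_add h1 hg2, integral_add (hf2.const_mul _) (hfg.const_mul _),
      integral_const_mul, integral_const_mul] at hnn
    nlinarith [hnn]
  have := discrim_le_zero key
  rw [discrim] at this
  nlinarith [this]

/-- The case `p = 4`, `q = 6` of the main theorem with the sharp constant `C(4,6) = 1/3`:
for every real-valued random variable `X` on a probability space with `E|X|^2 = 1` and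
`E|X|^6 < ∞`, one has `E|X| ≤ 1 - (1/3) * (E|X|^4 - 1)^2 / (E|X|^6 - 1)`. -/
theorem sharpened_cauchy_schwarz_four_six
    {Ω : Type*} [MeasurableSpace Ω] (μ : Measure Ω) [IsProbabilityMeasure μ]
    (X : Ω → ℝ) (hXmeas : Measurable X)
    (hX2 : (∫ ω, |X ω| ^ 2 ∂μ) = 1)
    (hX6 : Integrable (fun ω => |X ω| ^ 6) μ) :
    (∫ ω, |X ω| ∂μ) ≤ 1 -
      (1 / 3) * ((∫ ω, |X ω| ^ 4 ∂μ) - 1) ^ 2 / ((∫ ω, |X ω| ^ 6 ∂μ) - 1) := by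
  -- integrability of all powers up to 6
  have hpow : ∀ k : ℕ, k ≤ 6 → Integrable (fun ω => |X ω| ^ k) μ := by
    intro k hk
    refine Integrable.mono' ((integrable_const (1 : ℝ)).add hX6)
      ((hXmeas.abs.pow_const k)).aestronglyMeasurable
      (Filter.Eventually.of_forall fun ω => ?_)
    rw [Real.norm_eq_abs, abs_of_nonneg (pow_nonneg (abs_nonneg _) k)]
    simp only [Pi.add_apply]
    rcases le_total (|X ω|) 1 with h | h
    · have h1 : |X ω| ^ k ≤ 1 := pow_le_one₀ (abs_nonneg _) h
      have h2 : (0:ℝ) ≤ |X ω| ^ 6 := pow_nonneg (abs_nonneg _) 6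
      linarith
    · have h1 : |X ω| ^ k ≤ |X ω| ^ 6 := pow_le_pow_right₀ h hk
      linarith
  have h1 := hpow 1 (by norm_num)
  have h2 := hpow 2 (by norm_num)
  have h3 := hpow 3 (by norm_num)
  have h4 := hpow 4 (by norm_num)
  have h5 := hpow 5 (by norm_num)
  have h6 := hpow 6 (by norm_num)
  simp only [pow_one] at h1
  set I1 := ∫ ω, |X ω| ∂μ with hI1
  set I4 := ∫ ω, |X ω| ^ 4 ∂μ with hI4
  set I6 := ∫ ω, |X ω| ^ 6 ∂μ with hI6
  have hconst : (∫ _ω, (1:ℝ) ∂μ) = 1 := by simp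
  have hs2 : Integrable (fun ω => |X ω| ^ 2 - 2 * |X ω|) μ := h2.sub (h1.const_mul 2)
  have hs4 : Integrable (fun ω => |X ω| ^ 4 - 2 * |X ω| ^ 2) μ := h4.sub (h2.const_mul 2)
  have hs6 : Integrable (fun ω => |X ω| ^ 6 - 3 * |X ω| ^ 2) μ := h6.sub (h2.const_mul 3)
  -- integrability of the composite functions
  have hf2 : Integrable (fun ω => (|X ω| - 1) ^ 2) μ := by
    have : (fun ω => (|X ω| - 1) ^ 2)
        = fun ω => (|X ω| ^ 2 - 2 * |X ω| + 1) := by funext ω; ring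
    rw [this]
    exact (h2.sub (h1.const_mul 2)).add (integrable_const 1)
  have hfg : Integrable (fun ω => (|X ω| - 1) * ((|X ω| + 1) ^ 2 * (|X ω| - 1))) μ := by
    have : (fun ω => (|X ω| - 1) * ((|X ω| + 1) ^ 2 * (|X ω| - 1)))
        = fun ω => (|X ω| ^ 4 - 2 * |X ω| ^ 2 + 1) := by funext ω; ring
    rw [this]
    exact (h4.sub (h2.const_mul 2)).add (integrable_const 1)
  have hg2 : Integrable (fun ω => ((|X ω| + 1) ^ 2 * (|X ω| - 1)) ^ 2) μ := by
    have : (fun ω => ((|X ω| + 1) ^ 2 * (|X ω| - 1)) ^ 2)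
        = fun ω => (|X ω| ^ 6 + 2 * |X ω| ^ 5 - |X ω| ^ 4 - 4 * |X ω| ^ 3
            - |X ω| ^ 2 + 2 * |X ω| + 1) := by funext ω; ring
    rw [this]
    exact (((((h6.add (h5.const_mul 2)).sub h4).sub (h3.const_mul 4)).sub h2).add
      (h1.const_mul 2)).add (integrable_const 1)
  have hh : Integrable (fun ω => |X ω| ^ 6 - 3 * |X ω| ^ 2 + 2) μ :=
    (h6.sub (h2.const_mul 3)).add (integrable_const 2)
  -- key integral identities
  have eA : (∫ ω, (|X ω| - 1) ^ 2 ∂μ) = 2 - 2 * I1 := by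
    have e : (∫ ω, (|X ω| - 1) ^ 2 ∂μ)
        = ∫ ω, (|X ω| ^ 2 - 2 * |X ω| + 1) ∂μ := by congr 1; funext ω; ring
    rw [e, integral_add hs2 (integrable_const 1),
      integral_sub h2 (h1.const_mul 2), integral_const_mul, hconst, hX2]
    ring
  have eC : (∫ ω, (|X ω| - 1) * ((|X ω| + 1) ^ 2 * (|X ω| - 1)) ∂μ) = I4 - 1 := by
    have e : (∫ ω, (|X ω| - 1) * ((|X ω| + 1) ^ 2 * (|X ω| - 1)) ∂μ)
        = ∫ ω, (|X ω| ^ 4 - 2 * |X ω| ^ 2 + 1) ∂μ := by congr 1; funext ω; ring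
    rw [e, integral_add hs4 (integrable_const 1),
      integral_sub h4 (h2.const_mul 2), integral_const_mul, hconst, hX2]
    ring
  have eH : (∫ ω, (|X ω| ^ 6 - 3 * |X ω| ^ 2 + 2) ∂μ) = I6 - 1 := by
    rw [integral_add hs6 (integrable_const 2),
      integral_sub h6 (h2.const_mul 3), integral_const_mul, integral_const, hX2]
    simp
    ring
  -- nonnegativity facts
  have hA0 : 0 ≤ 2 - 2 * I1 := by
    rw [← eA]; exact integral_nonneg fun ω => sq_nonneg _
  have hb0 : (0:ℝ) ≤ I6 - 1 := by
    rw [← eH]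
    refine integral_nonneg fun ω => ?_
    simp only [Pi.zero_apply]
    nlinarith [sq_nonneg (|X ω| ^ 2 - 1), sq_nonneg (|X ω|), abs_nonneg (X ω)]
  -- pointwise bound and the resulting integral bound
  have hT : (∫ ω, ((|X ω| + 1) ^ 2 * (|X ω| - 1)) ^ 2 ∂μ)
      ≤ (3 / 2) * (I6 - 1) := by
    have step : (∫ ω, ((|X ω| + 1) ^ 2 * (|X ω| - 1)) ^ 2 ∂μ)
        ≤ ∫ ω, (3 / 2) * (|X ω| ^ 6 - 3 * |X ω| ^ 2 + 2) ∂μ := by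
      refine integral_mono hg2 (hh.const_mul _) fun ω => ?_
      have habs : (0:ℝ) ≤ |X ω| := abs_nonneg _
      nlinarith [sq_nonneg ((|X ω| - 1) * (|X ω| + 1) * (|X ω| - 2)), habs]
    rw [integral_const_mul, eH] at step
    exact step
  have hT0 : (0:ℝ) ≤ ∫ ω, ((|X ω| + 1) ^ 2 * (|X ω| - 1)) ^ 2 ∂μ :=
    integral_nonneg fun ω => sq_nonneg _
  -- Cauchy–Schwarz
  have hcs := my_cs μ (fun ω => |X ω| - 1) (fun ω => (|X ω| + 1) ^ 2 * (|X ω| - 1))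
    hf2 hg2 hfg
  rw [eA, eC] at hcs
  have key : (I4 - 1) ^ 2 ≤ 3 * (1 - I1) * (I6 - 1) := by
    calc (I4 - 1) ^ 2 ≤ (2 - 2 * I1) * ∫ ω, ((|X ω| + 1) ^ 2 * (|X ω| - 1)) ^ 2 ∂μ := hcs
    _ ≤ (2 - 2 * I1) * ((3 / 2) * (I6 - 1)) := by
        exact mul_le_mul_of_nonneg_left hT hA0
    _ = 3 * (1 - I1) * (I6 - 1) := by ring
  rcases hb0.eq_or_lt with hb | hb
  · rw [← hb, div_zero]
    linarith
  · have hfin : 1 / 3 * (I4 - 1) ^ 2 / (I6 - 1) ≤ 1 - I1 := by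
      rw [div_le_iff₀ hb]
      nlinarith [key]
    linarith
end

section
/- The constant $1/3$ in the inequality $\mathbb{E}|X| \leq 1 - \tfrac{1}{3}(\mathbb{E}|X|^4 - 1)^2/(\mathbb{E}|X|^6 - 1)$ (valid for all $X$ with $\mathbb{E}X^2 = 1$) is sharp: for every $C > 1/3$ there exists a random variable $X$ taking on exactly two positive values, with $\mathbb{E}X^2 = 1$ and $1 < \mathbb{E}X^6 < \infty$, such that $\mathbb{E}|X| > 1 - C \cdot (\mathbb{E}X^4 - 1)^2/(\mathbb{E}X^6 - 1)$. -/
open MeasureTheory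

private lemma my_integrable_dirac (f : ℝ → ℝ) (c : ℝ) : Integrable f (Measure.dirac c) :=
  (integrable_const (f c)).congr (ae_eq_dirac f).symm

private lemma two_point_integral (f : ℝ → ℝ) (a b r : ℝ) (hr : 0 ≤ r) (hr1 : r ≤ 1) :
    ∫ x, f x ∂(ENNReal.ofReal r • Measure.dirac a + ENNReal.ofReal (1 - r) • Measure.dirac b)
      = r * f a + (1 - r) * f b := by
  rw [integral_add_measure ((my_integrable_dirac f a).smul_measure ENNReal.ofReal_ne_top)
      ((my_integrable_dirac f b).smul_measure ENNReal.ofReal_ne_top),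
    integral_smul_measure, integral_smul_measure, integral_dirac, integral_dirac,
    ENNReal.toReal_ofReal hr, ENNReal.toReal_ofReal (by linarith), smul_eq_mul, smul_eq_mul]

private lemma dirac_singleton_ne {c d : ℝ} (h : c ≠ d) : (Measure.dirac c) {d} = 0 := by
  rw [Measure.dirac_apply' _ (measurableSet_singleton d)]
  exact Set.indicator_of_notMem (by simpa using h) _

set_option maxHeartbeats 1000000 in
/-- **Sharpness of the constant `1/3`** in the inequality
`E|X| ≤ 1 - (1/3) * (E|X|^4 - 1)^2 / (E|X|^6 - 1)` for `E X^2 = 1`: for every `C > 1/3` there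
is a random variable `X` taking exactly two positive values, with `E X^2 = 1` and
`1 < E X^6 < ∞`, such that `E X > 1 - C * (E X^4 - 1)^2 / (E X^6 - 1)`. -/
theorem constant_one_third_is_sharp (C : ℝ) (hC : 1 / 3 < C) :
    ∃ (Ω : Type) (_ : MeasurableSpace Ω) (μ : Measure Ω) (_ : IsProbabilityMeasure μ)
      (X : Ω → ℝ) (a b r : ℝ),
        Measurable X ∧
        0 < a ∧ a < b ∧ r ∈ Set.Ioo (0 : ℝ) 1 ∧
        μ {ω | X ω = a} = ENNReal.ofReal r ∧
        μ {ω | X ω = b} = ENNReal.ofReal (1 - r) ∧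
        (∫ ω, (X ω) ^ 2 ∂μ) = 1 ∧
        1 < (∫ ω, (X ω) ^ 6 ∂μ) ∧
        Integrable (fun ω => (X ω) ^ 6) μ ∧
        1 - C * ((∫ ω, (X ω) ^ 4 ∂μ) - 1) ^ 2 / ((∫ ω, (X ω) ^ 6 ∂μ) - 1) <
          (∫ ω, X ω ∂μ) := by
  -- choose the small value `a` close to 1
  set s : ℝ := min (C - 1/3) 1 / 2 with hs_def
  have hs0 : 0 < s := by
    have : 0 < min (C - 1/3) 1 := lt_min (by linarith) one_pos
    positivity
  have hs1 : s ≤ 1/2 := by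
    have : min (C - 1/3) 1 ≤ 1 := min_le_right _ _
    simp only [hs_def]; linarith
  have hsC : s ≤ (C - 1/3) / 2 := by
    have : min (C - 1/3) 1 ≤ C - 1/3 := min_le_left _ _
    simp only [hs_def]; linarith
  set a : ℝ := 1 - s with ha_def
  have ha0 : 1/2 ≤ a := by simp only [ha_def]; linarith
  have ha1 : a < 1 := by simp only [ha_def]; linarith
  have hC0 : 0 < C := by linarith
  -- the key inequality: `a² + 5 < 3C(a² + 3a + 2)`
  have key : a ^ 2 + 5 < 3 * C * (a ^ 2 + 3 * a + 2) := by
    have ha' : a = 1 - s := ha_def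
    have h1 : a ^ 2 + 5 ≤ 6 - 2 * s + s ^ 2 := by nlinarith
    have h2 : 6 - 5 * s ≤ a ^ 2 + 3 * a + 2 := by nlinarith [sq_nonneg s]
    have h3 : 3 * C * (6 - 5 * s) ≤ 3 * C * (a ^ 2 + 3 * a + 2) := by nlinarith
    nlinarith [mul_pos hC0 hs0]
  have hden : (0:ℝ) < 4 - a ^ 2 := by nlinarith
  set r : ℝ := 3 / (4 - a ^ 2) with hr_def
  have hr0 : 0 < r := by positivity
  have hr1 : r < 1 := by rw [hr_def, div_lt_one hden]; nlinarith
  set μ : Measure ℝ :=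
    ENNReal.ofReal r • Measure.dirac a + ENNReal.ofReal (1 - r) • Measure.dirac 2 with hμ_def
  have hint : ∀ f : ℝ → ℝ, ∫ x, f x ∂μ = r * f a + (1 - r) * f 2 := fun f =>
    two_point_integral f a 2 r hr0.le hr1.le
  have ha2ne : a ≠ 2 := by linarith
  have hprob : IsProbabilityMeasure μ := by
    constructor
    simp only [hμ_def, Measure.add_apply, Measure.smul_apply, Measure.dirac_apply_of_mem
      (Set.mem_univ _), smul_eq_mul, mul_one]
    rw [← ENNReal.ofReal_add hr0.le (by linarith), show r + (1 - r) = 1 by ring,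
      ENNReal.ofReal_one]
  have e1 : (∫ ω, id ω ∂μ) = r * a + (1 - r) * 2 := by simpa using hint (fun x => x)
  have e2 : (∫ ω, (id ω) ^ 2 ∂μ) = r * a ^ 2 + (1 - r) * 2 ^ 2 := by
    simpa using hint (fun x => x ^ 2)
  have e4 : (∫ ω, (id ω) ^ 4 ∂μ) = r * a ^ 4 + (1 - r) * 2 ^ 4 := by
    simpa using hint (fun x => x ^ 4)
  have e6 : (∫ ω, (id ω) ^ 6 ∂μ) = r * a ^ 6 + (1 - r) * 2 ^ 6 := by
    simpa using hint (fun x => x ^ 6)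
  have m6 : r * a ^ 6 + (1 - r) * 2 ^ 6 = 16 - 12 * a ^ 2 - 3 * a ^ 4 := by
    rw [hr_def]; field_simp; ring
  refine ⟨ℝ, inferInstance, μ, hprob, id, a, 2, r, measurable_id, by linarith, by linarith,
    ⟨hr0, hr1⟩, ?_, ?_, ?_, ?_, ?_, ?_⟩
  · -- μ {X = a} = r
    have : {ω : ℝ | id ω = a} = {a} := by ext x; simp
    rw [this]
    simp only [hμ_def, Measure.add_apply, Measure.smul_apply, smul_eq_mul,
      Measure.dirac_apply_of_mem (Set.mem_singleton a), dirac_singleton_ne (Ne.symm ha2ne),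
      mul_one, mul_zero, add_zero]
  · -- μ {X = 2} = 1 - r
    have : {ω : ℝ | id ω = (2:ℝ)} = {(2:ℝ)} := by ext x; simp
    rw [this]
    simp only [hμ_def, Measure.add_apply, Measure.smul_apply, smul_eq_mul,
      Measure.dirac_apply_of_mem (Set.mem_singleton (2:ℝ)), dirac_singleton_ne ha2ne,
      mul_one, mul_zero, zero_add]
  · -- second moment 1
    rw [e2, hr_def]; field_simp; ring
  · -- sixth moment > 1
    rw [e6, m6]
    have haa : a ^ 2 < 1 := by nlinarith
    have ha4 : a ^ 2 * a ^ 2 < 1 := by nlinarith [sq_nonneg a]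
    nlinarith [haa, ha4]
  · -- integrability
    exact ((my_integrable_dirac (fun x => x ^ 6) a).smul_measure ENNReal.ofReal_ne_top).add_measure
      ((my_integrable_dirac (fun x => x ^ 6) 2).smul_measure ENNReal.ofReal_ne_top)
  · -- the sharp inequality
    rw [e1, e4, e6, m6]
    have m4 : r * a ^ 4 + (1 - r) * 2 ^ 4 = 4 - 3 * a ^ 2 := by
      rw [hr_def]; field_simp; ring
    have m1 : r * a + (1 - r) * 2 = (2 * a + 1) / (a + 2) := by
      have h2 : a + 2 ≠ 0 := by linarith
      have hE : r * (4 - a ^ 2) = 3 := by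
        rw [hr_def]; exact div_mul_cancel₀ 3 (ne_of_gt hden)
      rw [eq_div_iff h2]; linear_combination -hE
    rw [m4, m1]
    have haa : a ^ 2 < 1 := by nlinarith
    have ha4 : a ^ 2 * a ^ 2 < 1 := by nlinarith [sq_nonneg a]
    have hd6 : (0:ℝ) < 16 - 12 * a ^ 2 - 3 * a ^ 4 - 1 := by nlinarith [haa, ha4]
    have hrat : C * (4 - 3 * a ^ 2 - 1) ^ 2 / (16 - 12 * a ^ 2 - 3 * a ^ 4 - 1)
        = 3 * C * (1 - a ^ 2) / (5 + a ^ 2) := by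
      rw [div_eq_div_iff (ne_of_gt hd6) (by positivity : (5:ℝ) + a ^ 2 ≠ 0)]; ring
    rw [hrat]
    have step : (1 - a) / (a + 2) < 3 * C * (1 - a ^ 2) / (5 + a ^ 2) := by
      rw [div_lt_div_iff₀ (by linarith) (by positivity)]
      have h := mul_lt_mul_of_pos_left key (show (0:ℝ) < 1 - a by linarith)
      nlinarith [h]
    have hy : 1 - (2 * a + 1) / (a + 2) = (1 - a) / (a + 2) := by
      rw [eq_div_iff (show a + 2 ≠ 0 by linarith)]
      field_simp
      ring
    linarith [step, hy.ge, hy.le]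
end

section
/- For all real numbers $a, c \in [0,1]$ one has $c(2c-1)a^2 - (c+1)^2 a + 3c^2 - c + 2 \geq 0$, and the infimum of the left-hand side over $a, c \in (0,1)$ equals $0$ (approached as $a \to 1$ and $c = 1/2$). -/
lemma key_nonneg : ∀ a ∈ Set.Icc (0 : ℝ) 1, ∀ c ∈ Set.Icc (0 : ℝ) 1,
    0 ≤ c * (2 * c - 1) * a ^ 2 - (c + 1) ^ 2 * a + 3 * c ^ 2 - c + 2 := by
  rintro a ⟨ha0, ha1⟩ c ⟨hc0, hc1⟩
  nlinarith [sq_nonneg (2*c-1), sq_nonneg (a-1), sq_nonneg (c-1), sq_nonneg (a*c - 1),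
    mul_nonneg ha0 hc0, mul_nonneg (sub_nonneg.2 ha1) (sub_nonneg.2 hc1),
    mul_nonneg (sub_nonneg.2 ha1) hc0, mul_nonneg ha0 (sub_nonneg.2 hc1),
    mul_nonneg (mul_nonneg ha0 ha0) hc0, sq_nonneg ((2*c-1)*(1-a))]

/-- The key polynomial computation behind `C(4,6) = 1/3`: for all `a, c ∈ [0,1]` one has
`c(2c-1)a² - (c+1)²a + 3c² - c + 2 ≥ 0`, and the infimum of the left-hand side over
`a, c ∈ (0,1)` equals `0`. -/
theorem key_polynomial_nonneg_and_infimum_zero :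
    (∀ a ∈ Set.Icc (0 : ℝ) 1, ∀ c ∈ Set.Icc (0 : ℝ) 1,
      0 ≤ c * (2 * c - 1) * a ^ 2 - (c + 1) ^ 2 * a + 3 * c ^ 2 - c + 2) ∧
    IsGLB {x : ℝ | ∃ a ∈ Set.Ioo (0 : ℝ) 1, ∃ c ∈ Set.Ioo (0 : ℝ) 1,
      c * (2 * c - 1) * a ^ 2 - (c + 1) ^ 2 * a + 3 * c ^ 2 - c + 2 = x} 0 := by
  refine ⟨key_nonneg, ?_, ?_⟩
  · rintro x ⟨a, ha, c, hc, rfl⟩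
    exact key_nonneg a ⟨ha.1.le, ha.2.le⟩ c ⟨hc.1.le, hc.2.le⟩
  · intro b hb
    by_contra hb0
    push_neg at hb0
    set a : ℝ := max (1/2) (1 - b/3) with hadef
    have ha0 : (0:ℝ) < a := lt_of_lt_of_le (by norm_num) (le_max_left _ _)
    have ha1 : a < 1 := by
      apply max_lt (by norm_num)
      linarith
    have hval : (1/2 : ℝ) * (2 * (1/2) - 1) * a ^ 2 - ((1/2) + 1) ^ 2 * a + 3 * (1/2) ^ 2 - (1/2) + 2
        = (9/4) * (1 - a) := by ring
    have hmem : (9/4 : ℝ) * (1 - a) ∈ {x : ℝ | ∃ a ∈ Set.Ioo (0 : ℝ) 1, ∃ c ∈ Set.Ioo (0 : ℝ) 1,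
        c * (2 * c - 1) * a ^ 2 - (c + 1) ^ 2 * a + 3 * c ^ 2 - c + 2 = x} :=
      ⟨a, ⟨ha0, ha1⟩, 1/2, by norm_num, hval⟩
    have := hb hmem
    have h1a : 1 - a ≤ b/3 := by
      have : 1 - b/3 ≤ a := le_max_right _ _
      linarith
    nlinarith
end

section
/- For all real numbers $a, c \in (0,1)$ and every real $p \geq 2$, one has $B(a,c,p) \leq p^2$, where $B(a,c,p) = \dfrac{c^{p-2}(a^p - 1) + c^p(a^2 - a^p) + 1 - a^2}{(1-c)(1-a)(1-ac)}$. -/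
open Real

/-- AM-GM Bernoulli, concave case: for `0 ≤ q ≤ 1`, `x^q ≤ 1 - q + q*x`. -/
private lemma bern_le {q x : ℝ} (hq0 : 0 ≤ q) (hq1 : q ≤ 1) (hx : 0 ≤ x) :
    x ^ q ≤ 1 - q + q * x := by
  have h := Real.geom_mean_le_arith_mean2_weighted (w₁ := q) (w₂ := 1 - q)
    (p₁ := x) (p₂ := 1) hq0 (by linarith) hx zero_le_one (by ring)
  rw [Real.one_rpow, mul_one] at h
  linarith

/-- Bernoulli, convex case: for `1 ≤ q`, `0 ≤ x`: `1 - x^q ≤ q*(1-x)`. -/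
private lemma bern_ge {q x : ℝ} (hq : 1 ≤ q) (hx : 0 ≤ x) :
    1 - x ^ q ≤ q * (1 - x) := by
  have hq0 : 0 < q := lt_of_lt_of_le one_pos hq
  have hw : (0:ℝ) ≤ 1 - 1/q := by
    have : 1/q ≤ 1 := by rw [div_le_one hq0]; exact hq
    linarith
  have h := Real.geom_mean_le_arith_mean2_weighted (w₁ := 1/q) (w₂ := 1 - 1/q)
    (p₁ := x ^ q) (p₂ := 1) (by positivity) hw (Real.rpow_nonneg hx q) zero_le_one
    (by ring)
  rw [Real.one_rpow, mul_one, ← Real.rpow_mul hx, one_div,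
    mul_inv_cancel₀ hq0.ne', Real.rpow_one] at h
  have h2 := mul_le_mul_of_nonneg_left h hq0.le
  have h3 : q * (q⁻¹ * x ^ q + (1 - q⁻¹) * 1) = x ^ q + q - 1 := by
    field_simp
    ring
  rw [h3] at h2
  linarith

/-- Uniform Bernoulli upper bound: `1 - x^q ≤ (q+1)*(1-x)` for `q ≥ 0`, `0 < x ≤ 1`. -/
private lemma bern_all {q x : ℝ} (hq0 : 0 ≤ q) (hx : 0 < x) (hx1 : x ≤ 1) :
    1 - x ^ q ≤ (q + 1) * (1 - x) := by
  rcases le_or_gt 1 q with h | h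
  · have := bern_ge h hx.le
    nlinarith
  · have hxq : x ^ (1:ℝ) ≤ x ^ q := Real.rpow_le_rpow_of_exponent_ge hx hx1 h.le
    rw [Real.rpow_one] at hxq
    nlinarith

private lemma rpow_split {x q : ℝ} (hx : 0 < x) : x ^ q = x * x ^ (q - 1) := by
  have h := (Real.rpow_add hx 1 (q - 1)).symm
  rw [Real.rpow_one, show (1:ℝ) + (q - 1) = q by ring] at h
  exact h.symm

set_option maxHeartbeats 1000000 in
/-- Base case of the key lemma: `q ∈ [0,1]`. -/
private lemma phi_base {q a c : ℝ} (hq0 : 0 ≤ q) (hq1 : q ≤ 1)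
    (ha0 : 0 < a) (ha1 : a < 1) (hc0 : 0 < c) (hc1 : c < 1) :
    (1 - c ^ q) * (1 - a) - a * c ^ q * (1 - a ^ q) * (1 - c)
      ≤ (1 + q * (q + 1) / 2) * ((1 - a * c) * (1 - a) * (1 - c)) := by
  have hac1 : a * c < 1 := by nlinarith
  have hA0 : 0 < a ^ q := Real.rpow_pos_of_pos ha0 q
  have hAle : a ^ q ≤ 1 := Real.rpow_le_one ha0.le ha1.le hq0
  have hC0 : 0 < c ^ q := Real.rpow_pos_of_pos hc0 q
  have hCle : c ^ q ≤ 1 := Real.rpow_le_one hc0.le hc1.le hq0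
  have hC10 : 0 < c ^ (q - 1) := Real.rpow_pos_of_pos hc0 _
  have hCc : c ^ q = c * c ^ (q - 1) := rpow_split hc0
  have hAa : a ≤ a ^ q := by
    have := Real.rpow_le_rpow_of_exponent_ge ha0 ha1.le hq1
    rwa [Real.rpow_one] at this
  have hcC : c ≤ c ^ q := by
    have := Real.rpow_le_rpow_of_exponent_ge hc0 hc1.le hq1
    rwa [Real.rpow_one] at this
  have hbern : a ^ q - a ≤ (1 - q) * (1 - a) := by
    have := bern_le hq0 hq1 ha0.le
    nlinarith
  have hamgm : 1 ≤ q * c ^ (q - 1) + (1 - q) * c ^ q := by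
    have h := Real.geom_mean_le_arith_mean2_weighted (w₁ := q) (w₂ := 1 - q)
      (p₁ := c ^ (q - 1)) (p₂ := c ^ q) hq0 (by linarith) hC10.le hC0.le (by ring)
    have he : (c ^ (q - 1)) ^ q * (c ^ q) ^ (1 - q) = 1 := by
      rw [← Real.rpow_mul hc0.le, ← Real.rpow_mul hc0.le,
        ← Real.rpow_add hc0, show (q-1)*q + q*(1-q) = 0 by ring, Real.rpow_zero]
    rwa [he] at h
  -- monotonicity : (1-c^q)*(1-ac) ≤ (1-a^q*c^q)*(1-c)
  have hL6 : (1 - c ^ q) * (1 - a * c) ≤ (1 - a ^ q * c ^ q) * (1 - c) := by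
    have key : (1 - a ^ q * c ^ q) * (1 - c) - (1 - c ^ q) * (1 - a * c)
        = c * ((1 - a) * (q * c ^ (q - 1) + (1 - q) * c ^ q - 1))
          + c * (c ^ (q - 1) * (1 - c) * ((1 - q) * (1 - a) - (a ^ q - a))) := by
      rw [hCc]; ring
    nlinarith [mul_nonneg hc0.le (mul_nonneg (by linarith : (0:ℝ) ≤ 1 - a)
        (by linarith : (0:ℝ) ≤ q * c ^ (q - 1) + (1 - q) * c ^ q - 1)),
      mul_nonneg hc0.le (mul_nonneg (mul_nonneg hC10.le (by linarith : (0:ℝ) ≤ 1 - c))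
        (by linarith : (0:ℝ) ≤ (1 - q) * (1 - a) - (a ^ q - a)))]
  have hT : (1 - c ^ q) * (1 - a) - a * c ^ q * (1 - a ^ q) * (1 - c)
      = (1 - a * c) * (1 - c ^ q) - a * ((1 - a ^ q * c ^ q) * (1 - c)) := by ring
  rw [hT]
  have h1 : a * ((1 - c ^ q) * (1 - a * c)) ≤ a * ((1 - a ^ q * c ^ q) * (1 - c)) :=
    mul_le_mul_of_nonneg_left hL6 ha0.le
  nlinarith [mul_nonneg (mul_nonneg (by linarith : (0:ℝ) ≤ 1 - a)
      (by linarith : (0:ℝ) ≤ 1 - a * c)) (by linarith : (0:ℝ) ≤ c ^ q - c),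
    mul_nonneg (mul_nonneg (mul_nonneg (by positivity : (0:ℝ) ≤ q * (q+1) / 2)
      (by linarith : (0:ℝ) ≤ 1 - a * c)) (by linarith : (0:ℝ) ≤ 1 - a))
      (by linarith : (0:ℝ) ≤ 1 - c)]

set_option maxHeartbeats 1000000 in
/-- Key lemma, by induction on an integer bound for `q`. -/
private lemma phi (n : ℕ) : ∀ q a c : ℝ, 0 ≤ q → q ≤ n + 1 →
    0 < a → a < 1 → 0 < c → c < 1 →
    (1 - c ^ q) * (1 - a) - a * c ^ q * (1 - a ^ q) * (1 - c)
      ≤ (1 + q * (q + 1) / 2) * ((1 - a * c) * (1 - a) * (1 - c)) := by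
  induction n with
  | zero =>
    intro q a c hq0 hqn ha0 ha1 hc0 hc1
    exact phi_base hq0 (by norm_num at hqn; linarith) ha0 ha1 hc0 hc1
  | succ n ih =>
    intro q a c hq0 hqn ha0 ha1 hc0 hc1
    rcases le_or_gt q 1 with hq1 | hq1
    · exact phi_base hq0 hq1 ha0 ha1 hc0 hc1
    · have hac1 : a * c < 1 := by nlinarith
      have hihq : q - 1 ≤ (n:ℝ) + 1 := by
        push_cast at hqn ⊢; linarith
      have IH := ih (q - 1) a c (by linarith) hihq ha0 ha1 hc0 hc1
      have hA : a ^ q = a * a ^ (q - 1) := rpow_split ha0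
      have hC : c ^ q = c * c ^ (q - 1) := rpow_split hc0
      have hBern : 1 - c ^ q ≤ q * (1 - c) := bern_ge hq1.le hc0.le
      have key : (1 - c ^ q) * (1 - a) - a * c ^ q * (1 - a ^ q) * (1 - c)
          = (1 - a) * (1 - c ^ q) * (1 - a * c)
            + a * c * ((1 - c ^ (q - 1)) * (1 - a)
                - a * c ^ (q - 1) * (1 - a ^ (q - 1)) * (1 - c)) := by
        rw [hA, hC]; ring
      rw [key]
      have hS : (0:ℝ) ≤ (1 - a*c) * (1 - a) * (1 - c) := by
        apply mul_nonneg (mul_nonneg (by linarith) (by linarith)) (by linarith)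
      have hK' : (0:ℝ) ≤ 1 + (q - 1) * (q - 1 + 1) / 2 := by nlinarith
      have hK'S := mul_nonneg hK' hS
      have h1 : a * c * ((1 - c ^ (q - 1)) * (1 - a)
              - a * c ^ (q - 1) * (1 - a ^ (q - 1)) * (1 - c))
          ≤ a * c * ((1 + (q - 1) * (q - 1 + 1) / 2) * ((1 - a*c) * (1 - a) * (1 - c))) :=
        mul_le_mul_of_nonneg_left IH (by positivity)
      have h2 : a * c * ((1 + (q - 1) * (q - 1 + 1) / 2) * ((1 - a*c) * (1 - a) * (1 - c)))
          ≤ 1 * ((1 + (q - 1) * (q - 1 + 1) / 2) * ((1 - a*c) * (1 - a) * (1 - c))) :=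
        mul_le_mul_of_nonneg_right (by linarith) hK'S
      have h3 : (1 - a) * (1 - c ^ q) * (1 - a * c)
          ≤ ((1 - a) * (q * (1 - c))) * (1 - a * c) :=
        mul_le_mul_of_nonneg_right
          (mul_le_mul_of_nonneg_left hBern (by linarith)) (by linarith)
      nlinarith [h1, h2, h3]

set_option maxHeartbeats 1000000 in
/-- **Upper bound lemma.** For all `a, c ∈ (0,1)` and all real `p ≥ 2`,
`B(a,c,p) = (c^(p-2)(aᵖ-1) + cᵖ(a²-aᵖ) + 1-a²) / ((1-c)(1-a)(1-ac)) ≤ p²`. -/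
theorem B_upper_bound (a c p : ℝ) (ha : a ∈ Set.Ioo (0 : ℝ) 1)
    (hc : c ∈ Set.Ioo (0 : ℝ) 1) (hp : 2 ≤ p) :
    (c ^ (p - 2) * (a ^ p - 1) + c ^ p * (a ^ 2 - a ^ p) + 1 - a ^ 2) /
        ((1 - c) * (1 - a) * (1 - a * c)) ≤ p ^ 2 := by
  obtain ⟨ha0, ha1⟩ := ha
  obtain ⟨hc0, hc1⟩ := hc
  have hac1 : a * c < 1 := by nlinarith
  have hD : (0:ℝ) < (1 - c) * (1 - a) * (1 - a * c) := by
    apply mul_pos (mul_pos (by linarith) (by linarith)) (by linarith)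
  rw [div_le_iff₀ hD]
  have hq0 : (0:ℝ) ≤ p - 2 := by linarith
  have hcp : c ^ p = c ^ (p - 2) * c ^ 2 := by
    rw [show p = (p - 2) + 2 by ring, Real.rpow_add hc0,
      show ((p - 2) + 2) - 2 = p - 2 by ring,
      show (2:ℝ) = ((2:ℕ):ℝ) by norm_num, Real.rpow_natCast]
  have hap : a ^ p = a ^ (p - 2) * a ^ 2 := by
    rw [show p = (p - 2) + 2 by ring, Real.rpow_add ha0,
      show ((p - 2) + 2) - 2 = p - 2 by ring,
      show (2:ℝ) = ((2:ℕ):ℝ) by norm_num, Real.rpow_natCast]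
  have hp2 : p ^ 2 = ((p - 2) + 2) ^ 2 := by ring
  rw [hcp, hap, hp2]
  set q := p - 2 with hq
  clear_value q
  obtain ⟨n, hn⟩ : ∃ n : ℕ, q ≤ (n : ℝ) + 1 :=
    ⟨⌈q⌉₊, by have := Nat.le_ceil q; linarith⟩
  have hphi := phi n q a c hq0 hn ha0 ha1 hc0 hc1
  have hC0 : 0 < c ^ q := Real.rpow_pos_of_pos hc0 q
  have hCle : c ^ q ≤ 1 := Real.rpow_le_one hc0.le hc1.le hq0
  have hA0 : 0 < a ^ q := Real.rpow_pos_of_pos ha0 q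
  have hAle : a ^ q ≤ 1 := Real.rpow_le_one ha0.le ha1.le hq0
  have h1A : 1 - a ^ q ≤ (q + 1) * (1 - a) := bern_all hq0 ha0 ha1.le
  have hS : (0:ℝ) ≤ (1 - a*c) * (1 - a) * (1 - c) := by
    apply mul_nonneg (mul_nonneg (by linarith) (by linarith)) (by linarith)
  have hK : (0:ℝ) ≤ 1 + q * (q + 1) / 2 := by nlinarith
  have hKS := mul_nonneg hK hS
  have hid : c ^ q * (a ^ q * a ^ 2 - 1) + c ^ q * c ^ 2 * (a ^ 2 - a ^ q * a ^ 2) + 1 - a ^ 2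
      = (1 + a) * ((1 - c ^ q) * (1 - a) - a * c ^ q * (1 - a ^ q) * (1 - c))
        + a * c ^ q * (1 - a ^ q) * ((1 - c) * (1 - a * c)) := by ring
  rw [hid]
  have e1 : (1 + a) * ((1 - c ^ q) * (1 - a) - a * c ^ q * (1 - a ^ q) * (1 - c))
      ≤ (1 + a) * ((1 + q * (q + 1) / 2) * ((1 - a*c) * (1 - a) * (1 - c))) :=
    mul_le_mul_of_nonneg_left hphi (by linarith)
  have e2 : (1 + a) * ((1 + q * (q + 1) / 2) * ((1 - a*c) * (1 - a) * (1 - c)))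
      ≤ 2 * ((1 + q * (q + 1) / 2) * ((1 - a*c) * (1 - a) * (1 - c))) :=
    mul_le_mul_of_nonneg_right (by linarith) hKS
  have h5 : a * c ^ q * (1 - a ^ q) ≤ (q + 1) * (1 - a) := by
    nlinarith [mul_nonneg (show (0:ℝ) ≤ 1 - a * c ^ q by nlinarith)
      (show (0:ℝ) ≤ 1 - a ^ q by linarith)]
  have e3 : a * c ^ q * (1 - a ^ q) * ((1 - c) * (1 - a * c))
      ≤ (q + 1) * ((1 - a*c) * (1 - a) * (1 - c)) := by
    have hfac : (0:ℝ) ≤ (1 - c) * (1 - a * c) :=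
      mul_nonneg (by linarith) (by linarith)
    calc a * c ^ q * (1 - a ^ q) * ((1 - c) * (1 - a * c))
        ≤ ((q + 1) * (1 - a)) * ((1 - c) * (1 - a * c)) :=
          mul_le_mul_of_nonneg_right h5 hfac
      _ = (q + 1) * ((1 - a*c) * (1 - a) * (1 - c)) := by ring
  have e4 : (0:ℝ) ≤ (2*q + 1) * ((1 - a*c) * (1 - a) * (1 - c)) :=
    mul_nonneg (by linarith) hS
  linarith [e1, e2, e3, e4]
end

section
/- Fix $p \in (0,1)$ and let $\xi_1, \ldots, \xi_n$ be i.i.d. random variables with $\mathbb{P}(\xi_1 = \sqrt{(1-p)/p}) = p$ and $\mathbb{P}(\xi_1 = -\sqrt{p/(1-p)}) = 1-p$. Then for all real numbers $a_1, \ldots, a_n$ with $a_1^2 + \cdots + a_n^2 = 1$, one has $\mathbb{E}\Big(\sum_{j=1}^n a_j \xi_j\Big)^4 = 3 + (\mathbb{E}\xi_1^4 - 3)\sum_{j=1}^n a_j^4$, and consequently $\mathbb{E}\Big(\sum_{j=1}^n a_j \xi_j\Big)^4 \geq 1 + \min\Big\{2, \frac{(2p-1)^2}{p(1-p)}\Big\}$.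 -/
open MeasureTheory ProbabilityTheory

set_option maxHeartbeats 2000000

lemma int_of_bound {Ω : Type*} [MeasurableSpace Ω] (μ : Measure Ω) [IsFiniteMeasure μ]
    {f : Ω → ℝ} (C : ℝ) (hf : Measurable f) (h : ∀ᵐ ω ∂μ, |f ω| ≤ C) : Integrable f μ :=
  (memLp_top_of_bound hf.aestronglyMeasurable C (by simpa [Real.norm_eq_abs] using h)).integrable le_top

lemma aux4 {Ω : Type*} [MeasurableSpace Ω] (μ : Measure Ω) [IsProbabilityMeasure μ]
    {f g : Ω → ℝ} (hf : Measurable f) (hg : Measurable g) {B C : ℝ}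
    (hB : ∀ᵐ ω ∂μ, |f ω| ≤ B) (hC : ∀ᵐ ω ∂μ, |g ω| ≤ C)
    (hB0 : 0 ≤ B) (hC0 : 0 ≤ C) (hind : IndepFun f g μ) (hf0 : (∫ ω, f ω ∂μ) = 0) (hg0 : (∫ ω, g ω ∂μ) = 0) :
    (∫ ω, (f ω + g ω) ∂μ) = 0 ∧
    (∫ ω, (f ω + g ω) ^ 2 ∂μ) = (∫ ω, (f ω) ^ 2 ∂μ) + (∫ ω, (g ω) ^ 2 ∂μ) ∧
    (∫ ω, (f ω + g ω) ^ 4 ∂μ) = (∫ ω, (f ω) ^ 4 ∂μ)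
      + 6 * (∫ ω, (f ω) ^ 2 ∂μ) * (∫ ω, (g ω) ^ 2 ∂μ) + (∫ ω, (g ω) ^ 4 ∂μ) := by
  have hbd : ∀ (j k : ℕ), ∀ᵐ ω ∂μ, |f ω ^ j * g ω ^ k| ≤ B ^ j * C ^ k := by
    intro j k
    filter_upwards [hB, hC] with ω h1 h2
    rw [abs_mul, abs_pow, abs_pow]
    exact mul_le_mul (pow_le_pow_left₀ (abs_nonneg _) h1 j)
      (pow_le_pow_left₀ (abs_nonneg _) h2 k) (by positivity) (by positivity)
  have hint : ∀ j k : ℕ, Integrable (fun ω => f ω ^ j * g ω ^ k) μ := fun j k =>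
    int_of_bound μ _ ((hf.pow_const j).mul (hg.pow_const k)) (hbd j k)
  have hprod : ∀ j k : ℕ, (∫ ω, f ω ^ j * g ω ^ k ∂μ)
      = (∫ ω, f ω ^ j ∂μ) * (∫ ω, g ω ^ k ∂μ) := by
    intro j k
    have h1 : IndepFun (fun ω => f ω ^ j) (fun ω => g ω ^ k) μ :=
      hind.comp (measurable_id.pow_const j) (measurable_id.pow_const k)
    have hIf : Integrable (fun ω => f ω ^ j) μ := by simpa using hint j 0
    have hIg : Integrable (fun ω => g ω ^ k) μ := by simpa using hint 0 k
    exact h1.integral_fun_mul_eq_mul_integral hIf.aestronglyMeasurable hIg.aestronglyMeasurable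
  have If1 : Integrable f μ := by simpa using hint 1 0
  have Ig1 : Integrable g μ := by simpa using hint 0 1
  have If2 : Integrable (fun ω => f ω ^ 2) μ := by simpa using hint 2 0
  have Ig2 : Integrable (fun ω => g ω ^ 2) μ := by simpa using hint 0 2
  have If4 : Integrable (fun ω => f ω ^ 4) μ := by simpa using hint 4 0
  have Ig4 : Integrable (fun ω => g ω ^ 4) μ := by simpa using hint 0 4
  have Ifg : Integrable (fun ω => f ω * g ω) μ := by simpa using hint 1 1
  have If3g : Integrable (fun ω => f ω ^ 3 * g ω) μ := by simpa using hint 3 1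
  have Ifg3 : Integrable (fun ω => f ω * g ω ^ 3) μ := by simpa using hint 1 3
  have If2g2 : Integrable (fun ω => f ω ^ 2 * g ω ^ 2) μ := hint 2 2
  have h11 : (∫ ω, f ω * g ω ∂μ) = 0 := by
    have := hprod 1 1; simp only [pow_one] at this; rw [this, hf0, zero_mul]
  have h31 : (∫ ω, f ω ^ 3 * g ω ∂μ) = 0 := by
    have := hprod 3 1; simp only [pow_one] at this; rw [this, hg0, mul_zero]
  have h13 : (∫ ω, f ω * g ω ^ 3 ∂μ) = 0 := by
    have := hprod 1 3; simp only [pow_one] at this; rw [this, hf0, zero_mul]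
  have h22 := hprod 2 2
  have A2 : Integrable (fun ω => f ω ^ 2 + 2 * (f ω * g ω)) μ := If2.add (Ifg.const_mul 2)
  have A41 : Integrable (fun ω => f ω ^ 4 + 4 * (f ω ^ 3 * g ω)) μ := If4.add (If3g.const_mul 4)
  have A42 : Integrable (fun ω => f ω ^ 4 + 4 * (f ω ^ 3 * g ω) + 6 * (f ω ^ 2 * g ω ^ 2)) μ :=
    A41.add (If2g2.const_mul 6)
  have A43 : Integrable (fun ω => f ω ^ 4 + 4 * (f ω ^ 3 * g ω) + 6 * (f ω ^ 2 * g ω ^ 2)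
      + 4 * (f ω * g ω ^ 3)) μ := A42.add (Ifg3.const_mul 4)
  refine ⟨?_, ?_, ?_⟩
  · rw [integral_add If1 Ig1, hf0, hg0, add_zero]
  · have e2 : (fun ω => (f ω + g ω) ^ 2)
        = fun ω => f ω ^ 2 + 2 * (f ω * g ω) + g ω ^ 2 := by funext ω; ring
    rw [show (∫ ω, (f ω + g ω) ^ 2 ∂μ) = ∫ ω, (f ω ^ 2 + 2 * (f ω * g ω) + g ω ^ 2) ∂μ
        from by rw [← e2],
      integral_add A2 Ig2, integral_add If2 (Ifg.const_mul 2),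
      integral_const_mul, h11]
    ring
  · have e4 : (fun ω => (f ω + g ω) ^ 4)
        = fun ω => f ω ^ 4 + 4 * (f ω ^ 3 * g ω) + 6 * (f ω ^ 2 * g ω ^ 2)
            + 4 * (f ω * g ω ^ 3) + g ω ^ 4 := by funext ω; ring
    rw [show (∫ ω, (f ω + g ω) ^ 4 ∂μ) = ∫ ω, (f ω ^ 4 + 4 * (f ω ^ 3 * g ω)
          + 6 * (f ω ^ 2 * g ω ^ 2) + 4 * (f ω * g ω ^ 3) + g ω ^ 4) ∂μ from by rw [← e4],
      integral_add A43 Ig4, integral_add A42 (Ifg3.const_mul 4),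
      integral_add A41 (If2g2.const_mul 6), integral_add If4 (If3g.const_mul 4),
      integral_const_mul, integral_const_mul, integral_const_mul, h31, h13, h22]
    ring

lemma two_point_moment {Ω : Type*} [MeasurableSpace Ω] (μ : Measure Ω) [IsProbabilityMeasure μ]
    {f : Ω → ℝ} (hf : Measurable f) {c d p : ℝ} (hcd : c ≠ d) (hp : 0 ≤ p) (hq : 0 ≤ 1 - p)
    (hA : μ {ω | f ω = c} = ENNReal.ofReal p) (hB : μ {ω | f ω = d} = ENNReal.ofReal (1 - p)) :
    (∀ᵐ ω ∂μ, f ω = c ∨ f ω = d) ∧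
      ∀ k : ℕ, (∫ ω, f ω ^ k ∂μ) = c ^ k * p + d ^ k * (1 - p) := by
  have hAm : MeasurableSet {ω | f ω = c} := hf (measurableSet_singleton c)
  have hBm : MeasurableSet {ω | f ω = d} := hf (measurableSet_singleton d)
  have hdisj : Disjoint {ω | f ω = c} {ω | f ω = d} := by
    rw [Set.disjoint_left]
    rintro ω h1 h2
    exact hcd (h1.symm.trans h2)
  have hunion : μ ({ω | f ω = c} ∪ {ω | f ω = d}) = 1 := by
    rw [measure_union hdisj hBm, hA, hB, ← ENNReal.ofReal_add hp hq]
    simp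
  have hcompl : μ ({ω | f ω = c} ∪ {ω | f ω = d})ᶜ = 0 := by
    rw [measure_compl (hAm.union hBm) (measure_ne_top _ _), measure_univ, hunion, tsub_self]
  have hae : ∀ᵐ ω ∂μ, f ω = c ∨ f ω = d := by
    have hsub : {ω | ¬(f ω = c ∨ f ω = d)} = ({ω | f ω = c} ∪ {ω | f ω = d})ᶜ := by
      ext ω; simp [Set.mem_union, not_or]
    rw [ae_iff, hsub]
    exact hcompl
  refine ⟨hae, fun k => ?_⟩
  have hcongr : (fun ω => f ω ^ k) =ᵐ[μ]
      fun ω => Set.indicator {ω | f ω = c} (fun _ => c ^ k) ω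
        + Set.indicator {ω | f ω = d} (fun _ => d ^ k) ω := by
    filter_upwards [hae] with ω hω
    rcases hω with h | h
    · simp [Set.indicator_apply, Set.mem_setOf_eq, h, hcd]
    · simp [Set.indicator_apply, Set.mem_setOf_eq, h, hcd.symm]
  rw [integral_congr_ae hcongr,
    integral_add ((integrable_const _).indicator hAm) ((integrable_const _).indicator hBm),
    integral_indicator_const _ hAm, integral_indicator_const _ hBm, measureReal_def, measureReal_def, hA, hB,
    ENNReal.toReal_ofReal hp, ENNReal.toReal_ofReal hq, smul_eq_mul, smul_eq_mul]
  ring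



open MeasureTheory

/-- **Fourth moment of a biased Rademacher sum.** Fix `p ∈ (0,1)` and let `ξ₁, …, ξₙ` be
i.i.d. with `P(ξ₁ = √((1-p)/p)) = p` and `P(ξ₁ = -√(p/(1-p))) = 1-p`. Then for all reals
`a₁, …, aₙ` with `∑ aⱼ² = 1`, one has
`E(∑ aⱼξⱼ)⁴ = 3 + (Eξ₁⁴ - 3) ∑ aⱼ⁴`, and consequently
`E(∑ aⱼξⱼ)⁴ ≥ 1 + min{2, (2p-1)²/(p(1-p))}`. -/
theorem biased_rademacher_fourth_moment (p : ℝ) (hp : p ∈ Set.Ioo (0 : ℝ) 1)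
    {Ω : Type*} [MeasurableSpace Ω] (μ : Measure Ω) [IsProbabilityMeasure μ]
    (n : ℕ) (hn : 0 < n) (ξ : Fin n → Ω → ℝ)
    (hmeas : ∀ i, Measurable (ξ i))
    (hindep : ProbabilityTheory.iIndepFun ξ μ)
    (hdist_pos : ∀ i, μ {ω | ξ i ω = Real.sqrt ((1 - p) / p)} = ENNReal.ofReal p)
    (hdist_neg : ∀ i, μ {ω | ξ i ω = -Real.sqrt (p / (1 - p))} = ENNReal.ofReal (1 - p))
    (a : Fin n → ℝ) (ha : ∑ j, (a j) ^ 2 = 1) :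
    (∫ ω, (∑ j, a j * ξ j ω) ^ 4 ∂μ) =
        3 + ((∫ ω, (ξ ⟨0, hn⟩ ω) ^ 4 ∂μ) - 3) * ∑ j, (a j) ^ 4 ∧
      1 + min 2 ((2 * p - 1) ^ 2 / (p * (1 - p))) ≤
        (∫ ω, (∑ j, a j * ξ j ω) ^ 4 ∂μ) := by
  obtain ⟨hp0, hp1⟩ := hp
  have hq0 : (0 : ℝ) < 1 - p := by linarith
  set c : ℝ := Real.sqrt ((1 - p) / p) with hcdef
  set d : ℝ := Real.sqrt (p / (1 - p)) with hddef
  have hc0 : 0 < c := Real.sqrt_pos.2 (by positivity)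
  have hd0 : 0 < d := Real.sqrt_pos.2 (by positivity)
  have hne : c ≠ -d := by intro h; rw [h] at hc0; linarith
  have hpt : ∀ i, (∀ᵐ ω ∂μ, ξ i ω = c ∨ ξ i ω = -d) ∧
      ∀ k : ℕ, (∫ ω, ξ i ω ^ k ∂μ) = c ^ k * p + (-d) ^ k * (1 - p) := fun i =>
    two_point_moment μ (hmeas i) hne hp0.le (by linarith) (hdist_pos i) (hdist_neg i)
  have hcsq : c ^ 2 = (1 - p) / p := Real.sq_sqrt (by positivity)
  have hdsq : d ^ 2 = p / (1 - p) := Real.sq_sqrt (by positivity)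
  have hsq1 : (c * p) ^ 2 = (1 - p) * p := by rw [mul_pow, hcsq]; field_simp
  have hsq2 : (d * (1 - p)) ^ 2 = (1 - p) * p := by rw [mul_pow, hdsq]; field_simp
  have hcd1 : c * p = d * (1 - p) := by
    have hz : (c * p - d * (1 - p)) * (c * p + d * (1 - p)) = 0 := by nlinarith [hsq1, hsq2]
    rcases mul_eq_zero.1 hz with h | h
    · linarith
    · nlinarith [mul_pos hc0 hp0, mul_pos hd0 hq0]
  have m1 : ∀ i, (∫ ω, ξ i ω ∂μ) = 0 := by
    intro i
    have h := (hpt i).2 1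
    simp only [pow_one] at h
    rw [h]; linarith [hcd1]
  have m2 : ∀ i, (∫ ω, ξ i ω ^ 2 ∂μ) = 1 := by
    intro i
    rw [(hpt i).2 2, show (-d) ^ 2 = d ^ 2 from by ring, hcsq, hdsq]
    field_simp
    ring
  set m4v : ℝ := (1 - p) ^ 2 / p + p ^ 2 / (1 - p) with hm4vdef
  have m4 : ∀ i, (∫ ω, ξ i ω ^ 4 ∂μ) = m4v := by
    intro i
    rw [(hpt i).2 4,
      show c ^ 4 * p + (-d) ^ 4 * (1 - p) = (c ^ 2) ^ 2 * p + (d ^ 2) ^ 2 * (1 - p) from by ring,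
      hcsq, hdsq, hm4vdef]
    field_simp
  have hM0 : (0 : ℝ) ≤ max c d := le_max_of_le_left hc0.le
  have hMb : ∀ i, ∀ᵐ ω ∂μ, |ξ i ω| ≤ max c d := by
    intro i
    filter_upwards [(hpt i).1] with ω h
    rcases h with h | h
    · rw [h, abs_of_pos hc0]; exact le_max_left _ _
    · rw [h, abs_neg, abs_of_pos hd0]; exact le_max_right _ _
  have main : ∀ s : Finset (Fin n),
      Measurable (fun ω => ∑ j ∈ s, a j * ξ j ω) ∧
      (∀ᵐ ω ∂μ, |∑ j ∈ s, a j * ξ j ω| ≤ ∑ j ∈ s, |a j| * max c d) ∧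
      (∫ ω, (∑ j ∈ s, a j * ξ j ω) ∂μ) = 0 ∧
      (∫ ω, (∑ j ∈ s, a j * ξ j ω) ^ 2 ∂μ) = ∑ j ∈ s, a j ^ 2 ∧
      (∫ ω, (∑ j ∈ s, a j * ξ j ω) ^ 4 ∂μ)
        = m4v * ∑ j ∈ s, a j ^ 4 + 3 * ((∑ j ∈ s, a j ^ 2) ^ 2 - ∑ j ∈ s, a j ^ 4) := by
    intro s
    induction s using Finset.induction_on with
    | empty => simp
    | @insert i s hi ih =>
      obtain ⟨ihmeas, ihbd, ih0, ih2, ih4⟩ := ih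
      have hXmeas : Measurable (fun ω => a i * ξ i ω) := (hmeas i).const_mul (a i)
      have hXbd : ∀ᵐ ω ∂μ, |a i * ξ i ω| ≤ |a i| * max c d := by
        filter_upwards [hMb i] with ω h
        rw [abs_mul]
        exact mul_le_mul_of_nonneg_left h (abs_nonneg _)
      have hX0 : (∫ ω, a i * ξ i ω ∂μ) = 0 := by rw [integral_const_mul, m1 i, mul_zero]
      have hX2 : (∫ ω, (a i * ξ i ω) ^ 2 ∂μ) = a i ^ 2 := by
        simp only [mul_pow]
        rw [integral_const_mul, m2 i, mul_one]
      have hX4 : (∫ ω, (a i * ξ i ω) ^ 4 ∂μ) = a i ^ 4 * m4v := by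
        simp only [mul_pow]
        rw [integral_const_mul, m4 i]
      have hindep' : ProbabilityTheory.iIndepFun
          (fun j (ω : Ω) => a j * ξ j ω) μ := by
        have h := hindep.comp (fun j x => a j * x) (fun j => measurable_id.const_mul (a j))
        exact h
      have hSX : IndepFun (fun ω => a i * ξ i ω) (fun ω => ∑ j ∈ s, a j * ξ j ω) μ := by
        have h := hindep'.indepFun_finsetSum_of_notMem
          (fun j => (hmeas j).const_mul (a j)) hi
        have he : (∑ j ∈ s, fun ω => a j * ξ j ω) = fun ω => ∑ j ∈ s, a j * ξ j ω := by
          funext ω; simp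
        rw [he] at h
        exact h.symm
      have haux := aux4 μ hXmeas ihmeas hXbd ihbd (mul_nonneg (abs_nonneg _) hM0)
        (Finset.sum_nonneg fun j _ => mul_nonneg (abs_nonneg _) hM0) hSX hX0 ih0
      obtain ⟨e0, e2, e4⟩ := haux
      have e0' : (∫ ω, (a i * ξ i ω + ∑ j ∈ s, a j * ξ j ω) ∂μ) = 0 := e0
      have e2' : (∫ ω, (a i * ξ i ω + ∑ j ∈ s, a j * ξ j ω) ^ 2 ∂μ)
          = (∫ ω, (a i * ξ i ω) ^ 2 ∂μ) + ∫ ω, (∑ j ∈ s, a j * ξ j ω) ^ 2 ∂μ := e2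
      have e4' : (∫ ω, (a i * ξ i ω + ∑ j ∈ s, a j * ξ j ω) ^ 4 ∂μ)
          = (∫ ω, (a i * ξ i ω) ^ 4 ∂μ)
            + 6 * (∫ ω, (a i * ξ i ω) ^ 2 ∂μ) * (∫ ω, (∑ j ∈ s, a j * ξ j ω) ^ 2 ∂μ)
            + ∫ ω, (∑ j ∈ s, a j * ξ j ω) ^ 4 ∂μ := e4
      refine ⟨?_, ?_, ?_, ?_, ?_⟩
      · simp only [Finset.sum_insert hi]
        exact hXmeas.add ihmeas
      · simp only [Finset.sum_insert hi]
        filter_upwards [hXbd, ihbd] with ω h1 h2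
        exact (abs_add_le _ _).trans (add_le_add h1 h2)
      · simp only [Finset.sum_insert hi]
        exact e0'
      · simp only [Finset.sum_insert hi]
        rw [e2', hX2, ih2]
      · simp only [Finset.sum_insert hi]
        rw [e4', hX4, hX2, ih2, ih4]
        ring
  obtain ⟨_, _, _, hs2, hs4⟩ := main Finset.univ
  have hm4i : (∫ ω, ξ ⟨0, hn⟩ ω ^ 4 ∂μ) = m4v := m4 ⟨0, hn⟩
  have hQ0 : (0 : ℝ) ≤ ∑ j, a j ^ 4 := Finset.sum_nonneg fun j _ => by positivity
  have hQ1 : (∑ j, a j ^ 4) ≤ 1 := by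
    calc ∑ j, a j ^ 4 = ∑ j, (a j ^ 2) ^ 2 := Finset.sum_congr rfl fun j _ => by ring
      _ ≤ ∑ j, a j ^ 2 * ∑ k, a k ^ 2 := by
          refine Finset.sum_le_sum fun j _ => ?_
          have h1 : a j ^ 2 ≤ ∑ k, a k ^ 2 :=
            Finset.single_le_sum (fun k _ => sq_nonneg (a k)) (Finset.mem_univ j)
          nlinarith [sq_nonneg (a j)]
      _ = (∑ j, a j ^ 2) * ∑ k, a k ^ 2 := by rw [← Finset.sum_mul]
      _ = 1 := by rw [ha, one_mul]
  have hr : m4v = 1 + (2 * p - 1) ^ 2 / (p * (1 - p)) := by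
    rw [hm4vdef]
    field_simp
    ring
  constructor
  · rw [hs4, hm4i, ha]; ring
  · rw [hs4, ha, hr]
    have hr0 : 0 ≤ (2 * p - 1) ^ 2 / (p * (1 - p)) := by positivity
    generalize hg : (2 * p - 1) ^ 2 / (p * (1 - p)) = r at hr0 ⊢
    generalize hq : (∑ j, a j ^ 4) = Q at hQ0 hQ1 ⊢
    rcases le_total r 2 with h | h
    · rw [min_eq_right h]
      nlinarith [mul_nonneg (sub_nonneg.2 h) (sub_nonneg.2 hQ1)]
    · rw [min_eq_left h]
      nlinarith [mul_nonneg (sub_nonneg.2 h) hQ0]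
end

section
/- Let $q > p > 2$ be real numbers and define the curve $\gamma(t) = (t^2, t^p, t^q, -t)$ for $t \in (0,1)$. Then $\gamma$ has totally positive torsion: for every $t \in (0,1)$, all four leading principal minors of the $4 \times 4$ matrix whose rows are $\gamma^{(1)}(t), \gamma^{(2)}(t), \gamma^{(3)}(t), \gamma^{(4)}(t)$ (the first through fourth derivatives of $\gamma$) are strictly positive. -/
lemma iteratedDeriv_rpow (p : ℝ) (n : ℕ) {t : ℝ} (ht : 0 < t) :
    iteratedDeriv n (fun x : ℝ => x ^ p) t =
      (∏ i ∈ Finset.range n, (p - i)) * t ^ (p - n) := by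
  induction n generalizing t with
  | zero => simp
  | succ n ih =>
    rw [iteratedDeriv_succ]
    have hev : iteratedDeriv n (fun x : ℝ => x ^ p) =ᶠ[nhds t]
        fun x => (∏ i ∈ Finset.range n, (p - i)) * x ^ (p - n) := by
      filter_upwards [Ioi_mem_nhds ht] with x hx using ih hx
    rw [hev.deriv_eq]
    have h : HasDerivAt (fun x : ℝ => (∏ i ∈ Finset.range n, (p - i)) * x ^ (p - n))
        ((∏ i ∈ Finset.range n, (p - i)) * ((p - n) * t ^ (p - n - 1))) t :=
      (Real.hasDerivAt_rpow_const (Or.inl ht.ne')).const_mul _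
    rw [h.deriv, Finset.prod_range_succ]
    have h2 : p - (↑(n + 1) : ℝ) = p - n - 1 := by push_cast; ring
    rw [h2]; ring

lemma myDetFinThree (a b c d e f g h i : ℝ) :
    Matrix.det !![a, b, c; d, e, f; g, h, i] =
      a*e*i - a*f*h - b*d*i + b*f*g + c*d*h - c*e*g := by
  rw [Matrix.det_fin_three]
  norm_num
  rfl

lemma myDetFinFour (a b c d e f g h i j k l m n o pp : ℝ) :
    Matrix.det !![a, b, c, d; e, f, g, h; i, j, k, l; m, n, o, pp] =
      a*f*k*pp - a*f*l*o - a*g*j*pp + a*g*l*n + a*h*j*o - a*h*k*n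
      - b*e*k*pp + b*e*l*o + b*g*i*pp - b*g*l*m - b*h*i*o + b*h*k*m
      + c*e*j*pp - c*e*l*n - c*f*i*pp + c*f*l*m + c*h*i*n - c*h*j*m
      - d*e*j*o + d*e*k*n + d*f*i*o - d*f*k*m - d*g*i*n + d*g*j*m := by
  have h1 : (Fin.succ 2 : Fin 4) = 3 := rfl
  have h2 : (Fin.succAbove 2 2 : Fin 4) = 3 := rfl
  have h3 : (Fin.succAbove 1 2 : Fin 4) = 3 := rfl
  have h4 : (Fin.castSucc 2 : Fin 4) = 2 := rfl
  have h5 : (Fin.succAbove 3 2 : Fin 4) = 2 := rfl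
  simp [Matrix.det_succ_row_zero, Fin.sum_univ_succ, h1, h2, h3, h4, h5]
  ring

/-- The curve `γ(t) = (t², tᵖ, t^q, -t)`, as a family of four real functions. -/
noncomputable def momentCurve (p q : ℝ) : Fin 4 → ℝ → ℝ :=
  ![fun t => t ^ 2, fun t => t ^ p, fun t => t ^ q, fun t => -t]

/-- The `4 × 4` matrix whose rows are the first through fourth derivatives
`γ⁽¹⁾(t), γ⁽²⁾(t), γ⁽³⁾(t), γ⁽⁴⁾(t)` of the curve `γ(t) = (t², tᵖ, t^q, -t)`. -/
noncomputable def momentCurveDerivMatrix (p q : ℝ) (t : ℝ) : Matrix (Fin 4) (Fin 4) ℝ :=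
  fun i j => iteratedDeriv (i.1 + 1) (momentCurve p q j) t

/-- **Totally positive torsion of the curve `γ(t) = (t², tᵖ, t^q, -t)`.** Let `q > p > 2`.
For every `t ∈ (0,1)`, all four leading principal minors of the `4 × 4` matrix whose rows
are `γ⁽¹⁾(t), γ⁽²⁾(t), γ⁽³⁾(t), γ⁽⁴⁾(t)` are strictly positive. -/
theorem momentCurve_totally_positive_torsion (p q : ℝ) (hp : 2 < p) (hpq : p < q)
    (t : ℝ) (ht : t ∈ Set.Ioo (0 : ℝ) 1) (k : Fin 4) :
    0 < Matrix.det (fun i j : Fin (k.1 + 1) =>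
      momentCurveDerivMatrix p q t
        (Fin.castLE (Nat.succ_le_of_lt k.isLt) i)
        (Fin.castLE (Nat.succ_le_of_lt k.isLt) j)) := by
  obtain ⟨ht0, ht1⟩ := ht
  have hA : 0 < t ^ p := Real.rpow_pos_of_pos ht0 p
  have hB : 0 < t ^ q := Real.rpow_pos_of_pos ht0 q
  -- derivatives of x ^ 2
  have hd2 : deriv (fun x : ℝ => x ^ 2) = fun x => 2 * x := by
    funext x; simp [deriv_pow]
  have hd2' : deriv (fun x : ℝ => 2 * x) = fun _ : ℝ => 2 := by
    funext x; simpa using ((hasDerivAt_id x).const_mul (2 : ℝ)).deriv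
  have hd2'' : deriv (fun _ : ℝ => (2 : ℝ)) = fun _ : ℝ => 0 := by
    funext x; simp
  have d2_1 : iteratedDeriv 1 (fun x : ℝ => x ^ 2) t = 2 * t := by
    rw [iteratedDeriv_one, hd2]
  have d2_2 : iteratedDeriv 2 (fun x : ℝ => x ^ 2) t = 2 := by
    rw [iteratedDeriv_succ, iteratedDeriv_one, hd2, hd2']
  have d2_3 : iteratedDeriv 3 (fun x : ℝ => x ^ 2) t = 0 := by
    rw [iteratedDeriv_succ, iteratedDeriv_succ, iteratedDeriv_one, hd2, hd2', hd2'']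
  have d2_4 : iteratedDeriv 4 (fun x : ℝ => x ^ 2) t = 0 := by
    rw [iteratedDeriv_succ, iteratedDeriv_succ, iteratedDeriv_succ, iteratedDeriv_one,
      hd2, hd2', hd2'']
    simp
  -- derivatives of -x
  have hdn : deriv (fun x : ℝ => -x) = fun _ : ℝ => -1 := by
    funext x; simp
  have hdn' : deriv (fun _ : ℝ => (-1 : ℝ)) = fun _ : ℝ => 0 := by
    funext x; simp
  have dn_1 : iteratedDeriv 1 (fun x : ℝ => -x) t = -1 := by
    rw [iteratedDeriv_one, hdn]
  have dn_2 : iteratedDeriv 2 (fun x : ℝ => -x) t = 0 := by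
    rw [iteratedDeriv_succ, iteratedDeriv_one, hdn, hdn']
  have dn_3 : iteratedDeriv 3 (fun x : ℝ => -x) t = 0 := by
    rw [iteratedDeriv_succ, iteratedDeriv_succ, iteratedDeriv_one, hdn, hdn']
    simp
  have dn_4 : iteratedDeriv 4 (fun x : ℝ => -x) t = 0 := by
    rw [iteratedDeriv_succ, iteratedDeriv_succ, iteratedDeriv_succ, iteratedDeriv_one, hdn, hdn']
    simp
  -- derivatives of x ^ r for real r
  have dr1 : ∀ r : ℝ, iteratedDeriv 1 (fun x : ℝ => x ^ r) t = r * t ^ (r - 1) := by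
    intro r; rw [iteratedDeriv_rpow r 1 ht0]; norm_num
  have dr2 : ∀ r : ℝ, iteratedDeriv 2 (fun x : ℝ => x ^ r) t = r * (r - 1) * t ^ (r - 2) := by
    intro r; rw [iteratedDeriv_rpow r 2 ht0]; norm_num [Finset.prod_range_succ]
  have dr3 : ∀ r : ℝ, iteratedDeriv 3 (fun x : ℝ => x ^ r) t
      = r * (r - 1) * (r - 2) * t ^ (r - 3) := by
    intro r; rw [iteratedDeriv_rpow r 3 ht0]; norm_num [Finset.prod_range_succ]
  have dr4 : ∀ r : ℝ, iteratedDeriv 4 (fun x : ℝ => x ^ r) t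
      = r * (r - 1) * (r - 2) * (r - 3) * t ^ (r - 4) := by
    intro r; rw [iteratedDeriv_rpow r 4 ht0]; norm_num [Finset.prod_range_succ]
  -- splitting rpow into t^r / t^n
  have ep : ∀ (r : ℝ) (n : ℕ) (m : ℝ), (n : ℝ) = m → t ^ (r - m) = t ^ r / t ^ n := by
    rintro r n m rfl
    rw [Real.rpow_sub ht0, Real.rpow_natCast]
  have htne : t ≠ 0 := ht0.ne'
  fin_cases k
  · -- k = 0 : 1×1 minor
    show (0:ℝ) < Matrix.det fun i j : Fin 1 =>
      momentCurveDerivMatrix p q t (Fin.castLE (by omega) i) (Fin.castLE (by omega) j)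
    refine lt_of_lt_of_eq ?_ (Matrix.det_fin_one _).symm
    show 0 < iteratedDeriv 1 (fun x : ℝ => x ^ 2) t
    rw [d2_1]; linarith
  · -- k = 1 : 2×2 minor
    show (0:ℝ) < Matrix.det fun i j : Fin 2 =>
      momentCurveDerivMatrix p q t (Fin.castLE (by omega) i) (Fin.castLE (by omega) j)
    have hM : (fun i j : Fin 2 =>
        momentCurveDerivMatrix p q t (Fin.castLE (by omega) i) (Fin.castLE (by omega) j))
        = !![2 * t, p * t ^ (p - 1); 2, p * (p - 1) * t ^ (p - 2)] := by
      funext i j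
      fin_cases i <;> fin_cases j
      · exact d2_1
      · exact dr1 p
      · exact d2_2
      · exact dr2 p
    rw [hM, Matrix.det_fin_two_of, ep p 1 1 (by norm_num), ep p 2 2 (by norm_num)]
    refine lt_of_lt_of_eq (b := 2 * p * (p - 2) * t ^ p / t) ?_ (by field_simp; ring)
    have c1 : (0:ℝ) < 2 * p * (p - 2) := by nlinarith
    exact div_pos (mul_pos c1 hA) ht0
  · -- k = 2 : 3×3 minor
    show (0:ℝ) < Matrix.det fun i j : Fin 3 =>
      momentCurveDerivMatrix p q t (Fin.castLE (by omega) i) (Fin.castLE (by omega) j)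
    have hM : (fun i j : Fin 3 =>
        momentCurveDerivMatrix p q t (Fin.castLE (by omega) i) (Fin.castLE (by omega) j))
        = !![2 * t, p * t ^ (p - 1), q * t ^ (q - 1);
             2, p * (p - 1) * t ^ (p - 2), q * (q - 1) * t ^ (q - 2);
             0, p * (p - 1) * (p - 2) * t ^ (p - 3), q * (q - 1) * (q - 2) * t ^ (q - 3)] := by
      funext i j
      fin_cases i <;> fin_cases j
      · exact d2_1
      · exact dr1 p
      · exact dr1 q
      · exact d2_2
      · exact dr2 p
      · exact dr2 q
      · exact d2_3
      · exact dr3 p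
      · exact dr3 q
    rw [hM, myDetFinThree, ep p 1 1 (by norm_num), ep p 2 2 (by norm_num),
      ep p 3 3 (by norm_num), ep q 1 1 (by norm_num), ep q 2 2 (by norm_num),
      ep q 3 3 (by norm_num)]
    refine lt_of_lt_of_eq
      (b := 2 * p * q * (q - p) * (p - 2) * (q - 2) * (t ^ p * t ^ q) / t ^ 4) ?_
      (by field_simp; ring)
    have c1 : (0:ℝ) < 2 * p * q * (q - p) * (p - 2) * (q - 2) :=
      mul_pos (mul_pos (mul_pos (mul_pos (by linarith) (by linarith)) (by linarith))
        (by linarith)) (by linarith)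
    exact div_pos (mul_pos c1 (mul_pos hA hB)) (by positivity)
  · -- k = 3 : 4×4 minor
    show (0:ℝ) < Matrix.det fun i j : Fin 4 =>
      momentCurveDerivMatrix p q t (Fin.castLE (by omega) i) (Fin.castLE (by omega) j)
    have hM : (fun i j : Fin 4 =>
        momentCurveDerivMatrix p q t (Fin.castLE (by omega) i) (Fin.castLE (by omega) j))
        = !![2 * t, p * t ^ (p - 1), q * t ^ (q - 1), -1;
             2, p * (p - 1) * t ^ (p - 2), q * (q - 1) * t ^ (q - 2), 0;
             0, p * (p - 1) * (p - 2) * t ^ (p - 3), q * (q - 1) * (q - 2) * t ^ (q - 3), 0;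
             0, p * (p - 1) * (p - 2) * (p - 3) * t ^ (p - 4),
               q * (q - 1) * (q - 2) * (q - 3) * t ^ (q - 4), 0] := by
      funext i j
      fin_cases i <;> fin_cases j
      · exact d2_1
      · exact dr1 p
      · exact dr1 q
      · exact dn_1
      · exact d2_2
      · exact dr2 p
      · exact dr2 q
      · exact dn_2
      · exact d2_3
      · exact dr3 p
      · exact dr3 q
      · exact dn_3
      · exact d2_4
      · exact dr4 p
      · exact dr4 q
      · exact dn_4
    rw [hM, myDetFinFour, ep p 1 1 (by norm_num), ep p 2 2 (by norm_num),
      ep p 3 3 (by norm_num), ep p 4 4 (by norm_num), ep q 1 1 (by norm_num),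
      ep q 2 2 (by norm_num), ep q 3 3 (by norm_num), ep q 4 4 (by norm_num)]
    refine lt_of_lt_of_eq
      (b := 2 * p * q * (p - 1) * (q - 1) * (p - 2) * (q - 2) * (q - p)
        * (t ^ p * t ^ q) / t ^ 7) ?_
      (by field_simp; ring)
    have c1 : (0:ℝ) < 2 * p * q * (p - 1) * (q - 1) * (p - 2) * (q - 2) * (q - p) :=
      mul_pos (mul_pos (mul_pos (mul_pos (mul_pos (mul_pos (mul_pos (by linarith)
        (by linarith)) (by linarith)) (by linarith)) (by linarith)) (by linarith))
        (by linarith)) (by linarith)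
    exact div_pos (mul_pos c1 (mul_pos hA hB)) (by positivity)
end

section
/- For every real $p > 2$ and every $c \in [0,1]$, one has $p c^{p-2} + (2-p)c^p - 2 + \frac{p-2}{p}(1-c)^2 \leq 0$. -/
open Real Set

lemma bern_aux {x s : ℝ} (hx0 : 0 < x) (hx1 : x ≤ 1) (hs0 : 0 ≤ s) (hs1 : s ≤ 1) :
    x ^ s * (1 + s * (1 - x)) ≤ 1 := by
  have hb : x ^ s ≤ 1 + s * (x - 1) := by
    have := rpow_one_add_le_one_add_mul_self (s := x - 1) (by linarith) hs0 hs1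
    simpa using this
  have h1 : x ^ s * (1 + s * (1 - x)) ≤ (1 + s * (x - 1)) * (1 + s * (1 - x)) := by
    have hpos : (0:ℝ) ≤ 1 + s * (1 - x) := by nlinarith
    nlinarith [Real.rpow_pos_of_pos hx0 s]
  nlinarith [sq_nonneg (s * (1 - x))]

lemma core {θ : ℝ} (hθ0 : 0 < θ) (hθ1 : θ < 1) {x : ℝ} (hx : x ∈ Icc (0:ℝ) 1) :
    x ^ θ ≤ θ * x + (1 - θ) - θ * (1 - θ) / 2 * (1 - x) ^ 2 := by
  set g : ℝ → ℝ := fun y => θ * y + (1 - θ) - θ * (1 - θ) / 2 * (1 - y) ^ 2 - y ^ θ with hg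
  have hcont : ContinuousOn g (Icc 0 1) := by
    apply ContinuousOn.sub
    · fun_prop
    · exact fun y _ => (Real.continuousAt_rpow_const y θ (Or.inr hθ0.le)).continuousWithinAt
  have hderiv : ∀ y ∈ interior (Icc (0:ℝ) 1), deriv g y ≤ 0 := by
    intro y hy
    rw [interior_Icc] at hy
    obtain ⟨hy0, hy1⟩ := hy
    have h1 : HasDerivAt (fun y : ℝ => y ^ θ) (θ * y ^ (θ - 1)) y :=
      Real.hasDerivAt_rpow_const (Or.inl hy0.ne')
    have h2 : HasDerivAt g (θ + θ * (1 - θ) * (1 - y) - θ * y ^ (θ - 1)) y := by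
      have hpoly : HasDerivAt (fun y : ℝ => θ * y + (1 - θ) - θ * (1 - θ) / 2 * (1 - y) ^ 2)
          (θ + θ * (1 - θ) * (1 - y)) y := by
        have := (((hasDerivAt_id y).const_mul θ).add_const (1 - θ)).sub
          ((((hasDerivAt_id y).const_sub 1).pow 2).const_mul (θ * (1 - θ) / 2))
        refine this.congr_deriv ?_
        simp only [id_eq]
        ring
      exact hpoly.sub h1
    rw [h2.deriv]
    have key : 1 + (1 - θ) * (1 - y) ≤ y ^ (θ - 1) := by
      have hb := bern_aux hy0 hy1.le (by linarith : (0:ℝ) ≤ 1 - θ) (by linarith)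
      have hyp : (0:ℝ) < y ^ (1 - θ) := Real.rpow_pos_of_pos hy0 _
      have heq : y ^ (θ - 1) = 1 / y ^ (1 - θ) := by
        rw [show θ - 1 = -(1 - θ) by ring, Real.rpow_neg hy0.le, one_div]
      rw [heq, le_div_iff₀ hyp, mul_comm]
      exact hb
    nlinarith [mul_le_mul_of_nonneg_left key hθ0.le]
  have hanti : AntitoneOn g (Icc 0 1) :=
    antitoneOn_of_deriv_nonpos (convex_Icc 0 1) hcont
      (fun y hy => by
        rw [interior_Icc] at hy
        have h1 : HasDerivAt (fun y : ℝ => y ^ θ) (θ * y ^ (θ - 1)) y :=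
          Real.hasDerivAt_rpow_const (Or.inl hy.1.ne')
        exact ((((((hasDerivAt_id y).const_mul θ).add_const (1 - θ)).sub
          ((((hasDerivAt_id y).const_sub 1).pow 2).const_mul (θ * (1 - θ) / 2))).sub
            h1).differentiableAt).differentiableWithinAt) hderiv
  have hmono := hanti hx (right_mem_Icc.mpr zero_le_one) hx.2
  have hg1 : g 1 = 0 := by simp [hg]
  rw [hg1] at hmono
  simp only [hg] at hmono
  linarith

/-- Derivative boundary estimate `ψ(c) ≤ 0` (i.e. `f'(1) ≤ 0`) in the proof of the lower
bound `B(a,c,p) ≥ min{1, p-2}`: for every real `p > 2` and every `c ∈ [0,1]`,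
`p c^(p-2) + (2-p)cᵖ - 2 + ((p-2)/p)(1-c)² ≤ 0`. -/
theorem psi_nonpos (p : ℝ) (hp : 2 < p) (c : ℝ) (hc : c ∈ Set.Icc (0 : ℝ) 1) :
    p * c ^ (p - 2) + (2 - p) * c ^ p - 2 + (p - 2) / p * (1 - c) ^ 2 ≤ 0 := by
  obtain ⟨hc0, hc1⟩ := hc
  have hp0 : (0:ℝ) < p := by linarith
  set θ : ℝ := (p - 2) / p with hθ
  have hθ0 : 0 < θ := div_pos (by linarith) hp0
  have hθ1 : θ < 1 := by rw [hθ, div_lt_one hp0]; linarith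
  have hxmem : c ^ p ∈ Icc (0:ℝ) 1 := ⟨Real.rpow_nonneg hc0 p, Real.rpow_le_one hc0 hc1 hp0.le⟩
  have hkey := core hθ0 hθ1 hxmem
  have hpθ : p * θ = p - 2 := by rw [hθ]; field_simp
  have hpow : (c ^ p) ^ θ = c ^ (p - 2) := by
    rw [← Real.rpow_mul hc0, hpθ]
  rw [hpow] at hkey
  have hcp : c ^ p ≤ c := by
    rcases eq_or_lt_of_le hc0 with h | h
    · rw [← h, Real.zero_rpow hp0.ne']
    · calc c ^ p ≤ c ^ (1:ℝ) := Real.rpow_le_rpow_of_exponent_ge h hc1 (by linarith)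
        _ = c := Real.rpow_one c
  have hsq : (1 - c) ^ 2 ≤ (1 - c ^ p) ^ 2 := by nlinarith [hxmem.2]
  have hmul := mul_le_mul_of_nonneg_left hkey hp0.le
  have hmul2 := mul_le_mul_of_nonneg_left hsq hθ0.le
  have hrhs : p * (θ * c ^ p + (1 - θ) - θ * (1 - θ) / 2 * (1 - c ^ p) ^ 2)
      = (p - 2) * c ^ p + 2 - θ * (1 - c ^ p) ^ 2 := by
    rw [hθ]; field_simp; ring
  rw [hrhs] at hmul
  linarith
end

section
/- For every real $p > 2$ and every $c \in [0,1]$, one has $(2-p)c^p + p c^{p-2} + p^2 c^2 - 2p^2 c - 2 + p^2 \geq 0$. -/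
/-- Weighted AM-GM: `(p-1) * c^(p-2) ≤ 1 + (p-2) * c^(p-1)` for `p > 2`, `c ≥ 0`. -/
lemma amgm_aux (p : ℝ) (hp : 2 < p) (c : ℝ) (hc : 0 ≤ c) :
    (p - 1) * c ^ (p - 2) ≤ 1 + (p - 2) * c ^ (p - 1) := by
  have hp1 : (0:ℝ) < p - 1 := by linarith
  have hw1 : (0:ℝ) ≤ 1 / (p - 1) := by positivity
  have hw2 : (0:ℝ) ≤ (p - 2) / (p - 1) := by
    apply div_nonneg <;> linarith
  have hw : 1 / (p - 1) + (p - 2) / (p - 1) = 1 := by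
    field_simp
    ring
  have hY : (0:ℝ) ≤ c ^ (p - 1) := Real.rpow_nonneg hc _
  have key := Real.geom_mean_le_arith_mean2_weighted hw1 hw2 zero_le_one hY hw
  have h1 : (1:ℝ) ^ (1 / (p - 1)) = 1 := Real.one_rpow _
  have h2 : (c ^ (p - 1)) ^ ((p - 2) / (p - 1)) = c ^ (p - 2) := by
    rw [← Real.rpow_mul hc]
    congr 1
    field_simp
  rw [h1, h2, one_mul] at key
  have := mul_le_mul_of_nonneg_left key (le_of_lt hp1)
  calc (p - 1) * c ^ (p - 2) ≤ (p - 1) * (1 / (p - 1) * 1 + (p - 2) / (p - 1) * c ^ (p - 1)) :=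
        this
    _ = 1 + (p - 2) * c ^ (p - 1) := by field_simp

/-- `2 * (1 - c^p) ≤ p * (1-c) * (1 + c^(p-1))` for `p > 2`, `c ∈ [0,1]`. -/
lemma lemA (p : ℝ) (hp : 2 < p) (c : ℝ) (hc0 : 0 ≤ c) (hc1 : c ≤ 1) :
    2 * (1 - c ^ p) ≤ p * (1 - c) * (1 + c ^ (p - 1)) := by
  set F : ℝ → ℝ := fun x => p * (1 - x) * (1 + x ^ (p - 1)) + 2 * x ^ p with hF
  have hp1 : (1:ℝ) ≤ p - 1 := by linarith
  have hpp : (1:ℝ) ≤ p := by linarith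
  have hder : ∀ x : ℝ, HasDerivAt F
      (p * (-(1 + x ^ (p - 1)) + (1 - x) * ((p - 1) * x ^ (p - 2)))
        + 2 * (p * x ^ (p - 1))) x := by
    intro x
    have d1 : HasDerivAt (fun x : ℝ => x ^ (p - 1)) ((p - 1) * x ^ (p - 2)) x := by
      have := Real.hasDerivAt_rpow_const (x := x) (p := p - 1) (Or.inr hp1)
      have he : p - 1 - 1 = p - 2 := by ring
      rwa [he] at this
    have d2 : HasDerivAt (fun x : ℝ => x ^ p) (p * x ^ (p - 1)) x :=
      Real.hasDerivAt_rpow_const (x := x) (p := p) (Or.inr hpp)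
    have d3 : HasDerivAt (fun x : ℝ => p * (1 - x) * (1 + x ^ (p - 1)))
        ((p * (-1)) * (1 + x ^ (p - 1)) + (p * (1 - x)) * ((p - 1) * x ^ (p - 2))) x := by
      have dA : HasDerivAt (fun x : ℝ => p * (1 - x)) (p * (-1)) x := by
        have : HasDerivAt (fun x : ℝ => 1 - x) (-1) x := by
          simpa using (hasDerivAt_id x).const_sub 1
        simpa using this.const_mul p
      have dB : HasDerivAt (fun x : ℝ => 1 + x ^ (p - 1)) ((p - 1) * x ^ (p - 2)) x :=
        d1.const_add 1
      exact dA.mul dB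
    have := d3.add (d2.const_mul 2)
    refine this.congr_deriv ?_
    ring
  have hanti : AntitoneOn F (Set.Icc (0:ℝ) 1) := by
    apply antitoneOn_of_deriv_nonpos (convex_Icc 0 1)
    · exact fun x _ => (hder x).continuousAt.continuousWithinAt
    · intro x _
      exact ((hder x).differentiableAt).differentiableWithinAt
    · intro x hx
      rw [interior_Icc] at hx
      rw [(hder x).deriv]
      have hx0 : 0 < x := hx.1
      have hXY : x ^ (p - 2) * x = x ^ (p - 1) := by
        rw [show p - 1 = p - 2 + 1 by ring, Real.rpow_add_one (ne_of_gt hx0)]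
      have hAM := amgm_aux p hp x (le_of_lt hx0)
      have hp0 : (0:ℝ) < p := by linarith
      calc p * (-(1 + x ^ (p - 1)) + (1 - x) * ((p - 1) * x ^ (p - 2)))
            + 2 * (p * x ^ (p - 1))
          = p * ((p - 1) * x ^ (p - 2) - (p - 2) * x ^ (p - 1) - 1) := by
            rw [← hXY]; ring
        _ ≤ p * 0 := mul_le_mul_of_nonneg_left (by linarith) (le_of_lt hp0)
        _ = 0 := mul_zero p
  have h1mem : (1:ℝ) ∈ Set.Icc (0:ℝ) 1 := by constructor <;> norm_num
  have hcmem : c ∈ Set.Icc (0:ℝ) 1 := ⟨hc0, hc1⟩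
  have := hanti hcmem h1mem hc1
  have hF1 : F 1 = 2 := by
    simp [hF, Real.one_rpow]
  rw [hF1] at this
  simp only [hF] at this
  linarith

/-- `1 ≤ p*(1-c) + c^(p-2)` for `p > 2`, `0 < c ≤ 1`. -/
lemma lemB (p : ℝ) (hp : 2 < p) (c : ℝ) (hc0 : 0 < c) (hc1 : c ≤ 1) :
    1 ≤ p * (1 - c) + c ^ (p - 2) := by
  rcases le_or_gt (p - 2) 1 with h | h
  · have h1 : c ^ (1:ℝ) ≤ c ^ (p - 2) :=
      Real.rpow_le_rpow_of_exponent_ge hc0 hc1 h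
    rw [Real.rpow_one] at h1
    nlinarith
  · have hs : (-1:ℝ) ≤ c - 1 := by linarith
    have hB := one_add_mul_self_le_rpow_one_add hs (le_of_lt h)
    have he : (1:ℝ) + (c - 1) = c := by ring
    rw [he] at hB
    nlinarith

/-- The estimate `h(c) ≥ 0` (i.e. `g'(1) ≥ 0` with `M = p²`) in the proof of the upper
bound `B(a,c,p) ≤ p²`: for every real `p > 2` and every `c ∈ [0,1]`,
`(2-p)cᵖ + p c^(p-2) + p²c² - 2p²c - 2 + p² ≥ 0`. -/
theorem h_nonneg (p : ℝ) (hp : 2 < p) (c : ℝ) (hc : c ∈ Set.Icc (0 : ℝ) 1) :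
    0 ≤ (2 - p) * c ^ p + p * c ^ (p - 2) + p ^ 2 * c ^ 2 - 2 * p ^ 2 * c - 2 + p ^ 2 := by
  obtain ⟨hc0, hc1⟩ := hc
  rcases eq_or_lt_of_le hc0 with h0 | h0
  · -- c = 0
    subst h0
    rw [Real.zero_rpow (by positivity : p ≠ 0),
        Real.zero_rpow (by intro h; nlinarith [h] : p - 2 ≠ 0)]
    nlinarith
  · -- c > 0
    have hY : c ^ (p - 1) = c ^ (p - 2) * c := by
      rw [show p - 1 = p - 2 + 1 by ring, Real.rpow_add_one (ne_of_gt h0)]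
    have hZ : c ^ p = c ^ (p - 1) * c := by
      nth_rewrite 1 [show p = p - 1 + 1 by ring]
      rw [Real.rpow_add_one (ne_of_gt h0)]
    have hA := lemA p hp c (le_of_lt h0) hc1
    have hB := lemB p hp c h0 hc1
    have ht : 0 ≤ 1 - c := by linarith
    have hp0 : (0:ℝ) < p := by linarith
    have h2 : 0 ≤ p * (1 - c) * (p * (1 - c) + c ^ (p - 2) - 1) := by
      apply mul_nonneg (mul_nonneg (le_of_lt hp0) ht)
      linarith
    -- goal = p(1-c)(p(1-c)+X-1) + (p(1-c)(1+Y) - (2 - 2Z)), with Y = Xc, Z = Xc²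
    nlinarith [hA, h2, hY, hZ, mul_le_mul_of_nonneg_right hA (le_of_lt h0)]
end

section
/- For every real $p > 2$ and every $c \in [0,1]$, one has $-(p+1)(p-2)c^p + p(p-1)c^{p-2} + 2p^2 c^2 - 2p^2 c - 2 \leq 0$. -/
open Real

lemma rpow_le_taylor2 {s : ℝ} (hs0 : 0 < s) (hs1 : s ≤ 1) {c : ℝ} (hc0 : 0 ≤ c) (hc1 : c ≤ 1) :
    c ^ s ≤ 1 - s * (1 - c) + s * (s - 1) / 2 * (1 - c) ^ 2 := by
  set a : ℝ := 1 - s + s * (s - 1) / 2 with ha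
  set b : ℝ := s - s * (s - 1) with hb
  set d : ℝ := s * (s - 1) / 2 with hd
  set f : ℝ → ℝ := fun x => a + b * x + d * x ^ 2 - x ^ s with hf
  have hderiv : ∀ x : ℝ, 0 < x → HasDerivAt f (b + d * (2 * x) - s * x ^ (s - 1)) x := by
    intro x hx0
    have h1 : HasDerivAt (fun x : ℝ => x ^ s) (s * x ^ (s - 1)) x :=
      Real.hasDerivAt_rpow_const (Or.inl hx0.ne')
    have hpoly : HasDerivAt (fun x : ℝ => a + b * x + d * x ^ 2) (b + d * (2 * x)) x := by
      have h2 := (hasDerivAt_id x).const_mul b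
      have h3 := (hasDerivAt_pow 2 x).const_mul d
      have h4 := ((hasDerivAt_const x a).add h2).add h3
      have h5 : HasDerivAt (fun x : ℝ => a + b * x + d * x ^ 2) (0 + b * 1 + d * (((2:ℕ):ℝ) * x ^ (2 - 1))) x := h4
      convert h5 using 1
      norm_num
    exact hpoly.sub h1
  have hanti : AntitoneOn f (Set.Icc (0:ℝ) 1) := by
    apply antitoneOn_of_deriv_nonpos (convex_Icc 0 1)
    · apply ContinuousOn.sub
      · fun_prop
      · intro x _
        exact (Real.continuousAt_rpow_const x s (Or.inr hs0.le)).continuousWithinAt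
    · intro x hx
      rw [interior_Icc] at hx
      exact ((hderiv x hx.1).differentiableAt).differentiableWithinAt
    · intro x hx
      rw [interior_Icc] at hx
      obtain ⟨hx0, hx1⟩ := hx
      rw [(hderiv x hx0).deriv]
      have ht0 : 0 ≤ 1 - s := by linarith
      have hB : x ^ (1 - s) ≤ 1 + (1 - s) * (x - 1) := by
        have := rpow_one_add_le_one_add_mul_self (s := x - 1) (by linarith) ht0 (by linarith)
        simpa using this
      have hxt : 0 < x ^ (1 - s) := Real.rpow_pos_of_pos hx0 _
      have hkey : 1 + (1 - s) * (1 - x) ≤ x ^ (s - 1) := by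
        have hxs : x ^ (s - 1) = (x ^ (1 - s))⁻¹ := by
          rw [← Real.rpow_neg hx0.le]; ring_nf
        rw [hxs, ← one_div, le_div_iff₀ hxt]
        nlinarith [sq_nonneg ((1 - s) * (1 - x))]
      have := mul_le_mul_of_nonneg_left hkey hs0.le
      simp only [hb, hd]
      nlinarith [this]
  have h1 : f 1 = 0 := by
    simp only [hf, ha, hb, hd, Real.one_rpow]; ring
  have h2 := hanti ⟨hc0, hc1⟩ (by norm_num) hc1
  rw [h1] at h2
  simp only [hf, ha, hb, hd] at h2
  nlinarith [h2]

/-- The concavity estimate `v(c) ≤ 0` (i.e. `g''(1) ≤ 0` with `M = p²`) in the proof of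
the upper bound `B(a,c,p) ≤ p²`: for every real `p > 2` and every `c ∈ [0,1]`,
`-(p+1)(p-2)cᵖ + p(p-1)c^(p-2) + 2p²c² - 2p²c - 2 ≤ 0`. -/
theorem v_nonpos (p : ℝ) (hp : 2 < p) (c : ℝ) (hc : c ∈ Set.Icc (0 : ℝ) 1) :
    -(p + 1) * (p - 2) * c ^ p + p * (p - 1) * c ^ (p - 2) +
        2 * p ^ 2 * c ^ 2 - 2 * p ^ 2 * c - 2 ≤ 0 := by
  obtain ⟨hc0, hc1⟩ := hc
  rcases eq_or_lt_of_le hc0 with hc0' | hc0'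
  · -- c = 0
    rw [← hc0']
    rw [Real.zero_rpow (by positivity : p ≠ 0), Real.zero_rpow (by intro h; nlinarith [h] : p - 2 ≠ 0)]
    norm_num
  · -- c > 0
    have hsplit : c ^ p = c ^ (p - 2) * c ^ 2 := by
      rw [← Real.rpow_natCast c 2, ← Real.rpow_add hc0']
      norm_num
    rw [hsplit]
    rcases le_or_gt 3 p with hp3 | hp3
    · -- p ≥ 3 : c^(p-2) ≤ c and (t ↦ tA - N) with t ≤ c
      have ht : c ^ (p - 2) ≤ c := by
        have := Real.rpow_le_rpow_of_exponent_ge hc0' hc1 (by linarith : (1:ℝ) ≤ p - 2)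
        rwa [Real.rpow_one] at this
      have ht0 : 0 ≤ c ^ (p - 2) := Real.rpow_nonneg hc0 _
      have hA : 0 ≤ p * (p - 1) - (p + 1) * (p - 2) * c ^ 2 := by
        nlinarith [mul_le_mul_of_nonneg_left (show c ^ 2 ≤ 1 by nlinarith)
          (show (0:ℝ) ≤ (p + 1) * (p - 2) by nlinarith)]
      have hq : 0 ≤ -(p + 1) * (p - 2) * c ^ 2 + (p ^ 2 + p + 2) * c + 2 := by
        nlinarith [mul_nonneg hc0 (show (0:ℝ) ≤ p ^ 2 + p + 2 - (p + 1) * (p - 2) * c by nlinarith)]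
      nlinarith [mul_le_mul_of_nonneg_right (sub_nonneg.mpr ht) hA,
        mul_nonneg (sub_nonneg.mpr hc1) hq]
    · -- 2 < p < 3
      rcases le_or_gt (p * (1 - c)) 2 with hcase | hcase
      · -- near c = 1: Bernoulli both ways
        have hBp : 1 + p * (c - 1) ≤ c ^ p := by
          have := one_add_mul_self_le_rpow_one_add (s := c - 1) (by linarith) (by linarith : 1 ≤ p)
          simpa using this
        have hBs : c ^ (p - 2) ≤ 1 + (p - 2) * (c - 1) := by
          have := rpow_one_add_le_one_add_mul_self (s := c - 1) (by linarith)
            (by linarith : (0:ℝ) ≤ p - 2) (by linarith : p - 2 ≤ 1)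
          simpa using this
        rw [← hsplit]
        nlinarith [mul_le_mul_of_nonneg_left hBp (show (0:ℝ) ≤ (p + 1) * (p - 2) by nlinarith),
          mul_le_mul_of_nonneg_left hBs (show (0:ℝ) ≤ p * (p - 1) by nlinarith),
          mul_nonneg (sub_nonneg.mpr hc1) (sub_nonneg.mpr hcase)]
      · -- far from 1: drop c^p, use Taylor bound on c^(p-2)
        have hT : c ^ (p - 2) ≤ 1 - (p - 2) * (1 - c) + (p - 2) * (p - 3) / 2 * (1 - c) ^ 2 := by
          have := rpow_le_taylor2 (s := p - 2) (by linarith) (by linarith) hc0 hc1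
          convert this using 2; ring
        have hcp : 0 ≤ c ^ (p - 2) * c ^ 2 :=
          mul_nonneg (Real.rpow_nonneg hc0 _) (sq_nonneg c)
        have hG : p * (p - 1) * (1 - (p - 2) * (1 - c) + (p - 2) * (p - 3) / 2 * (1 - c) ^ 2)
            + 2 * p ^ 2 * c ^ 2 - 2 * p ^ 2 * c - 2 ≤ 0 := by
          nlinarith [mul_nonneg (sub_nonneg.mpr hc1) (le_of_lt (sub_pos.mpr hcase)),
            mul_pos (sub_pos.mpr hcase) (sub_pos.mpr hcase),
            mul_nonneg (mul_nonneg (sub_nonneg.mpr hc1) hc0) (le_of_lt (sub_pos.mpr hcase)),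
            sq_nonneg (1 - c), mul_pos (sub_pos.mpr hp) (sub_pos.mpr hp3),
            mul_nonneg (mul_nonneg (sub_nonneg.mpr hc1) (sub_nonneg.mpr hc1)) (sub_pos.mpr hcase).le]
        nlinarith [mul_le_mul_of_nonneg_left hT (show (0:ℝ) ≤ p * (p - 1) by nlinarith),
          mul_nonneg (show (0:ℝ) ≤ (p + 1) * (p - 2) by nlinarith) hcp]
end

section
/- For every real $t \in [0,1)$, one has $2^{4-t} \geq (2-t)^{2-t}(1-t)^{2-t}(2+t)^2(1+t)^{2-t}$. -/
/-- For every real `t ∈ [0,1)`,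
`2^(4-t) ≥ (2-t)^(2-t) (1-t)^(2-t) (2+t)² (1+t)^(2-t)`. -/
theorem power_inequality (t : ℝ) (ht : t ∈ Set.Ico (0 : ℝ) 1) :
    (2 - t) ^ (2 - t) * (1 - t) ^ (2 - t) * (2 + t) ^ 2 * (1 + t) ^ (2 - t) ≤
      (2 : ℝ) ^ (4 - t) := by
  obtain ⟨ht0, ht1⟩ := ht
  set s : ℝ := 2 - t with hs
  have hs1 : (1 : ℝ) ≤ s := by simp [hs]; linarith
  have hs0 : (0 : ℝ) ≤ s := by linarith
  have ha : (0 : ℝ) ≤ 2 - t := by linarith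
  have hb : (0 : ℝ) ≤ 1 - t := by linarith
  have hd : (0 : ℝ) ≤ 1 + t := by linarith
  set x : ℝ := (2 - t) * (1 - t) * (1 + t) / 2 with hx
  have hx0 : (0 : ℝ) ≤ x := by positivity
  -- combine the three rpow factors
  have h1 : (2 - t) ^ s * (1 - t) ^ s * (1 + t) ^ s = (2 * x) ^ s := by
    rw [← Real.mul_rpow ha hb, ← Real.mul_rpow (by positivity) hd]
    congr 1
    rw [hx]; ring
  have h2 : ((2 : ℝ) * x) ^ s = 2 ^ s * x ^ s :=
    Real.mul_rpow (by norm_num) hx0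
  have h3 : (2 : ℝ) ^ (4 - t) = 2 ^ s * 4 := by
    rw [show (4 : ℝ) - t = s + 2 by rw [hs]; ring, Real.rpow_add (by norm_num)]
    norm_num
  -- key estimates via `y ≤ exp (y - 1)`
  have hxe : x ^ s ≤ Real.exp ((x - 1) * s) := by
    calc x ^ s ≤ (Real.exp (x - 1)) ^ s := by
          apply Real.rpow_le_rpow hx0 _ hs0
          linarith [Real.add_one_le_exp (x - 1)]
      _ = Real.exp ((x - 1) * s) := (Real.exp_mul _ _).symm
  have hce : (2 + t) ^ 2 ≤ 4 * Real.exp t := by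
    have h := Real.add_one_le_exp (t / 2)
    have h2' : (0 : ℝ) ≤ t / 2 + 1 := by linarith
    have hsq : (t / 2 + 1) ^ 2 ≤ (Real.exp (t / 2)) ^ 2 := by
      apply pow_le_pow_left₀ h2' h
    have : (Real.exp (t / 2)) ^ 2 = Real.exp t := by
      rw [← Real.exp_nat_mul]; congr 1; push_cast; ring
    nlinarith [this, hsq]
  have hkey : (x - 1) * s + t ≤ 0 := by
    have h : (x - 1) * s + t = -(t ^ 2 * (1 - t) * (3 - t)) / 2 := by
      rw [hx, hs]; ring
    rw [h]
    have : (0 : ℝ) ≤ t ^ 2 * (1 - t) * (3 - t) := by nlinarith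
    linarith
  have hmain : x ^ s * (2 + t) ^ 2 ≤ 4 := by
    calc x ^ s * (2 + t) ^ 2 ≤ Real.exp ((x - 1) * s) * (4 * Real.exp t) := by
          apply mul_le_mul hxe hce (by positivity) (Real.exp_pos _).le
      _ = 4 * Real.exp ((x - 1) * s + t) := by rw [Real.exp_add]; ring
      _ ≤ 4 * Real.exp 0 := by
          have := Real.exp_le_exp.mpr hkey
          linarith
      _ = 4 := by simp
  calc (2 - t) ^ s * (1 - t) ^ s * (2 + t) ^ 2 * (1 + t) ^ s
      = (2 - t) ^ s * (1 - t) ^ s * (1 + t) ^ s * (2 + t) ^ 2 := by ring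
    _ = 2 ^ s * (x ^ s * (2 + t) ^ 2) := by rw [h1, h2]; ring
    _ ≤ 2 ^ s * 4 := by
        have h2s : (0 : ℝ) < 2 ^ s := Real.rpow_pos_of_pos (by norm_num) s
        nlinarith [hmain]
    _ = (2 : ℝ) ^ (4 - t) := h3.symm
end
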